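/- arXiv:1802.02543 — 2 statements merged into one kernel-verified Lean document; each statement's English description precedes it below -/
import Mathlib

section
/- The truncated solutions fₙ (defined by fₙ(t) = a₀ + Σ_{(x,y)∈Π, |y|≤n} 1_{(t₀,t]}(x) y^⟨−1/α(fₙ(x₋))⟩) converge in supremum norm to the unique function f ∈ D[t₀,t₁) satisfying f(t) = a₀ + Σ_{(x,y)∈Π} 1_{(t₀,t]}(x) y^⟨−1/α(f(x₋))⟩. -/
open MeasureTheory Filter Set

noncomputable def spow (r s : ℝ) : ℝ := Real.sign r * |r| ^ s

noncomputable def wab (a b y : ℝ) : ℝ :=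
  max (|y| ^ (-1 / a) * (1 + abs (Real.log (abs y)))) (|y| ^ (-1 / b) * (1 + abs (Real.log (abs y))))

noncomputable def Mconst (α : ℝ → ℝ) : ℝ := ⨆ ξ : ℝ, |deriv α ξ| / (α ξ) ^ 2

/-- Càdlàg on `[t₀,t₁)`: right-continuous on `[t₀,t₁)` and left limits exist on `(t₀,t₁]`. -/
def CadlagOn (f : ℝ → ℝ) (t₀ t₁ : ℝ) : Prop :=
  (∀ u ∈ Set.Ico t₀ t₁, Filter.Tendsto f (nhdsWithin u (Set.Ioi u)) (nhds (f u))) ∧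
  (∀ u ∈ Set.Ioc t₀ t₁, ∃ L, Filter.Tendsto f (nhdsWithin u (Set.Iio u)) (nhds L))

/-- The sum `∑_{(x,y)∈Λ} 1_{(t₀,t]}(x) y^⟨-1/α(f(x₋))⟩`. -/
noncomputable def jumpSum (α : ℝ → ℝ) (Λ : Set (ℝ × ℝ)) (t₀ t : ℝ) (f : ℝ → ℝ) : ℝ :=
  ∑' p : Λ, if (p : ℝ × ℝ).1 ∈ Set.Ioc t₀ t
    then spow (p : ℝ × ℝ).2 (-1 / α (Function.leftLim f (p : ℝ × ℝ).1)) else 0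

/-- The truncated sum over points with `|y| ≤ n`. -/
noncomputable def jumpSumTrunc (α : ℝ → ℝ) (Λ : Set (ℝ × ℝ)) (n : ℝ) (t₀ t : ℝ) (f : ℝ → ℝ) : ℝ :=
  ∑' p : Λ, if |(p : ℝ × ℝ).2| ≤ n ∧ (p : ℝ × ℝ).1 ∈ Set.Ioc t₀ t
    then spow (p : ℝ × ℝ).2 (-1 / α (Function.leftLim f (p : ℝ × ℝ).1)) else 0


lemma pow_sub_pow_ge (j : ℕ) {x y : ℝ} (hx : 0 ≤ x) (hxy : x ≤ y) :
    (j+1 : ℝ) * x ^ j * (y - x) ≤ y ^ (j+1) - x ^ (j+1) := by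
  induction j with
  | zero => simp
  | succ j ih =>
    have hy : 0 ≤ y := hx.trans hxy
    have h1 : (0:ℝ) ≤ (j+1 : ℝ) * x ^ j * (y - x) := by
      have := pow_nonneg hx j
      have := sub_nonneg.2 hxy
      positivity
    have h3 : y * ((j+1 : ℝ) * x ^ j * (y - x)) ≤ y * (y ^ (j+1) - x ^ (j+1)) :=
      mul_le_mul_of_nonneg_left ih hy
    have e4 : x * ((j+1 : ℝ) * x ^ j * (y - x)) ≤ y * ((j+1 : ℝ) * x ^ j * (y - x)) :=
      mul_le_mul_of_nonneg_right hxy h1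
    have e6 : ((j:ℝ)+1+1) * x ^ (j+1) * (y - x)
        = x * ((j+1 : ℝ) * x ^ j * (y - x)) + x ^ (j+1) * (y - x) := by ring
    have e7 : (0:ℝ) ≤ x ^ (j+1) * (y - x) :=
      mul_nonneg (pow_nonneg hx _) (sub_nonneg.2 hxy)
    have e8 : y ^ (j+1+1) - x ^ (j+1+1)
        = y * (y ^ (j+1) - x ^ (j+1)) + x ^ (j+1) * (y - x) := by ring
    push_cast
    linarith

lemma sum_incr_le {ι κ : Type*} [LinearOrder κ] (j : ℕ) (A c : ι → ℝ) (key : ι → κ)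
    (hc : ∀ i, 0 ≤ c i) :
    ∀ (F : Finset ι) (M : ℝ), 0 ≤ M →
    (∀ p ∈ F, ∀ q ∈ F, key p < key q → A p + c p ≤ A q) →
    (∀ p ∈ F, 0 ≤ A p) →
    (∀ p ∈ F, A p + c p ≤ M) →
    (∀ p ∈ F, ∀ q ∈ F, key p = key q → p = q) →
    ∑ p ∈ F, ((A p + c p) ^ (j+1) - A p ^ (j+1)) ≤ M ^ (j+1) := by
  classical
  intro F
  induction F using Finset.strongInduction with
  | _ F IH =>
    intro M hM hmono hA hup hinj
    rcases F.eq_empty_or_nonempty with rfl | hne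
    · simpa using pow_nonneg hM (j+1)
    obtain ⟨p, hp, hmax⟩ := F.exists_max_image key hne
    have hsub : F.erase p ⊂ F := Finset.erase_ssubset hp
    have hApos : 0 ≤ A p := hA p hp
    have herase : ∀ q ∈ F.erase p, A q + c q ≤ A p := by
      intro q hq
      have hqF := Finset.mem_of_mem_erase hq
      have hne' : q ≠ p := Finset.ne_of_mem_erase hq
      have hkey : key q < key p := by
        rcases lt_or_eq_of_le (hmax q hqF) with h | h
        · exact h
        · exact absurd (hinj q hqF p hp h) hne'
      exact hmono q hqF p hp hkey
    have IH' := IH (F.erase p) hsub (A p) hApos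
      (fun x hx y hy => hmono x (Finset.mem_of_mem_erase hx) y (Finset.mem_of_mem_erase hy))
      (fun x hx => hA x (Finset.mem_of_mem_erase hx))
      herase
      (fun x hx y hy => hinj x (Finset.mem_of_mem_erase hx) y (Finset.mem_of_mem_erase hy))
    rw [← Finset.sum_erase_add F _ hp]
    have hterm : (A p + c p) ^ (j+1) - A p ^ (j+1) ≤ M ^ (j+1) - A p ^ (j+1) := by
      have : (A p + c p) ^ (j+1) ≤ M ^ (j+1) :=
        pow_le_pow_left₀ (by linarith [hc p]) (hup p hp) _
      linarith
    linarith [IH']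


lemma gronwall {ι : Type*} [Countable ι] (w x : ι → ℝ) (t₀ t₁ : ℝ)
    (hw : ∀ p, 0 ≤ w p) (hS : Summable w)
    (hx1 : ∀ p, x p < t₁)
    (h : ℝ → ℝ) (H : ι → ℝ) (ε T : ℝ) (hε : 0 ≤ ε) (hT : 0 ≤ T)
    (hh0 : ∀ t, t₀ ≤ t → t < t₁ → 0 ≤ h t ∧ h t ≤ T)
    (hH0 : ∀ p, 0 ≤ H p)
    (hH : ∀ p, ∀ B, 0 ≤ B → (∀ s, t₀ ≤ s → s < x p → h s ≤ B) → H p ≤ B)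
    (hh : ∀ t, t₀ ≤ t → t < t₁ → h t ≤ ε + ∑' p, (if x p ≤ t then w p * H p else 0)) :
    ∀ t, t₀ ≤ t → t < t₁ → h t ≤ ε * Real.exp (∑' p, w p) := by
  classical
  set S : ℝ := ∑' p, w p with hSdef
  have hS0 : 0 ≤ S := tsum_nonneg hw
  set G : ℝ → ℝ := fun t => ∑' p, if x p ≤ t then w p else 0 with hGdef
  set Gm : ℝ → ℝ := fun u => ∑' p, if x p < u then w p else 0 with hGmdef
  have sumG : ∀ t, Summable (fun p => if x p ≤ t then w p else 0) := fun t =>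
    hS.of_nonneg_of_le (fun p => by split <;> simp [hw p]) (fun p => by split <;> simp [hw p])
  have sumGm : ∀ u, Summable (fun p => if x p < u then w p else 0) := fun u =>
    hS.of_nonneg_of_le (fun p => by split <;> simp [hw p]) (fun p => by split <;> simp [hw p])
  have hG0 : ∀ t, 0 ≤ G t := fun t => tsum_nonneg (fun p => by split <;> simp [hw p])
  have hGm0 : ∀ u, 0 ≤ Gm u := fun u => tsum_nonneg (fun p => by split <;> simp [hw p])
  have hGS : ∀ t, G t ≤ S := fun t =>
    Summable.tsum_le_tsum (fun p => by split <;> simp [hw p]) (sumG t) hS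
  have hGmS : ∀ u, Gm u ≤ S := fun u =>
    Summable.tsum_le_tsum (fun p => by split <;> simp [hw p]) (sumGm u) hS
  have hGsGm : ∀ s u, s < u → G s ≤ Gm u := by
    intro s u hsu
    refine Summable.tsum_le_tsum (fun p => ?_) (sumG s) (sumGm u)
    by_cases hp : x p ≤ s
    · simp only [hp, if_true, lt_of_le_of_lt hp hsu, le_refl]
    · simp only [hp, if_false]; split <;> simp [hw p]
  -- injective key into ℝ ×ₗ ℕ
  obtain ⟨e, he⟩ := exists_injective_nat ι
  set K : ι → ℝ ×ₗ ℕ := fun p => toLex (x p, e p) with hKdef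
  have hKinj : Function.Injective K := by
    intro p q hpq
    have h2 : (x p, e p) = (x q, e q) := toLex.injective hpq
    exact he (congrArg Prod.snd h2)
  have hKlt : ∀ p q, x p < x q → K p < K q := by
    intro p q hpq
    exact Prod.Lex.lt_iff.2 (Or.inl hpq)
  have hKle : ∀ p q, K p < K q → x p ≤ x q := by
    intro p q hpq
    rcases Prod.Lex.lt_iff.1 hpq with h' | h'
    · exact le_of_lt h'
    · exact le_of_eq h'.1
  set A : ι → ℝ := fun p => ∑' q, if K q < K p then w q else 0 with hAdef
  have sumA : ∀ p, Summable (fun q => if K q < K p then w q else 0) := fun p =>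
    hS.of_nonneg_of_le (fun q => by split <;> simp [hw q]) (fun q => by split <;> simp [hw q])
  have hA0 : ∀ p, 0 ≤ A p := fun p => tsum_nonneg (fun q => by split <;> simp [hw q])
  have sumDelta : ∀ p : ι, Summable (fun q => if q = p then w q else 0) := fun p =>
    hS.of_nonneg_of_le (fun q => by split <;> simp [hw q]) (fun q => by split <;> simp [hw q])
  have tsumDelta : ∀ p : ι, (∑' q, if q = p then w q else 0) = w p := by
    intro p
    have : (fun q => if q = p then w q else 0) = fun q => if q = p then w p else 0 := by
      funext q; by_cases hq : q = p <;> simp [hq]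
    rw [this, tsum_ite_eq]
  have propA1 : ∀ p q, K p < K q → A p + w p ≤ A q := by
    intro p q hpq
    have := Summable.tsum_add (sumA p) (sumDelta p)
    rw [tsumDelta p] at this
    rw [hAdef]
    simp only []
    rw [← this]
    refine Summable.tsum_le_tsum (fun r => ?_) ((sumA p).add (sumDelta p)) (sumA q)
    by_cases hr : r = p
    · subst hr; simp [lt_irrefl, hpq]
    · simp only [hr, if_false, add_zero]
      split
      · rename_i h'; simp [lt_trans h' hpq]
      · split <;> simp [hw r]
  have propA2 : ∀ (t : ℝ) p, x p ≤ t → A p + w p ≤ G t := by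
    intro t p hpt
    have := Summable.tsum_add (sumA p) (sumDelta p)
    rw [tsumDelta p] at this
    rw [← this]
    refine Summable.tsum_le_tsum (fun r => ?_) ((sumA p).add (sumDelta p)) (sumG t)
    by_cases hr : r = p
    · subst hr; simp [lt_irrefl, hpt]
    · simp only [hr, if_false, add_zero]
      split
      · rename_i h'; simp [le_trans (hKle _ _ h') hpt]
      · split <;> simp [hw r]
  have propA3 : ∀ p, Gm (x p) ≤ A p := by
    intro p
    refine Summable.tsum_le_tsum (fun q => ?_) (sumGm (x p)) (sumA p)
    split
    · rename_i h'; simp [hKlt _ _ h']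
    · split <;> simp [hw _]
  -- key inequality
  have sumWGm : ∀ (j : ℕ) (t : ℝ), Summable (fun p => if x p ≤ t then w p * Gm (x p) ^ j else 0) := by
    intro j t
    refine (hS.mul_right (S ^ j)).of_nonneg_of_le (fun p => ?_) (fun p => ?_)
    · split
      · exact mul_nonneg (hw p) (pow_nonneg (hGm0 _) j)
      · exact le_refl 0
    · split
      · exact mul_le_mul_of_nonneg_left (pow_le_pow_left₀ (hGm0 _) (hGmS _) j) (hw p)
      · exact mul_nonneg (hw p) (pow_nonneg hS0 j)
  have key : ∀ (j : ℕ) (t : ℝ),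
      (∑' p, if x p ≤ t then w p * Gm (x p) ^ j else 0) ≤ G t ^ (j+1) / (j+1) := by
    intro j t
    refine Summable.tsum_le_of_sum_le (sumWGm j t) (fun F => ?_)
    rw [← Finset.sum_filter]
    set F' := F.filter (fun p => x p ≤ t) with hF'
    have hmemF' : ∀ p ∈ F', x p ≤ t := fun p hp => (Finset.mem_filter.1 hp).2
    have step1 : ∀ p ∈ F', w p * Gm (x p) ^ j ≤ ((A p + w p) ^ (j+1) - A p ^ (j+1)) / (j+1) := by
      intro p hp
      have h1 : Gm (x p) ^ j ≤ A p ^ j := pow_le_pow_left₀ (hGm0 _) (propA3 p) j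
      have h2 : (j+1 : ℝ) * A p ^ j * ((A p + w p) - A p) ≤ (A p + w p) ^ (j+1) - A p ^ (j+1) :=
        pow_sub_pow_ge j (hA0 p) (by linarith [hw p])
      have h3 : (0:ℝ) < (j:ℝ) + 1 := by positivity
      rw [le_div_iff₀ h3]
      have h4 : w p * Gm (x p) ^ j * ((j:ℝ)+1) ≤ w p * A p ^ j * ((j:ℝ)+1) :=
        mul_le_mul_of_nonneg_right (mul_le_mul_of_nonneg_left h1 (hw p)) h3.le
      nlinarith [h2, h4]
    have step2 : ∑ p ∈ F', ((A p + w p) ^ (j+1) - A p ^ (j+1)) ≤ G t ^ (j+1) :=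
      sum_incr_le j A w K hw F' (G t) (hG0 t)
        (fun p _ q _ hpq => propA1 p q hpq)
        (fun p _ => hA0 p)
        (fun p hp => propA2 t p (hmemF' p hp))
        (fun p _ q _ hpq => hKinj hpq)
    calc ∑ p ∈ F', w p * Gm (x p) ^ j
        ≤ ∑ p ∈ F', ((A p + w p) ^ (j+1) - A p ^ (j+1)) / (j+1) := Finset.sum_le_sum step1
      _ = (∑ p ∈ F', ((A p + w p) ^ (j+1) - A p ^ (j+1))) / (j+1) := by
          rw [Finset.sum_div]
      _ ≤ G t ^ (j+1) / (j+1) := by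
          apply div_le_div_of_nonneg_right step2
          positivity
  have hHT : ∀ p, H p ≤ T := fun p =>
    hH p T hT (fun s hs hs' => (hh0 s hs (hs'.trans (hx1 p))).2)
  have sumWH : ∀ t : ℝ, Summable (fun p => if x p ≤ t then w p * H p else 0) := by
    intro t
    refine (hS.mul_right T).of_nonneg_of_le (fun p => ?_) (fun p => ?_)
    · split
      · exact mul_nonneg (hw p) (hH0 p)
      · exact le_refl 0
    · split
      · exact mul_le_mul_of_nonneg_left (hHT p) (hw p)
      · exact mul_nonneg (hw p) hT
  have claim : ∀ (k : ℕ) (t : ℝ), t₀ ≤ t → t < t₁ →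
      h t ≤ ε * (∑ j ∈ Finset.range k, G t ^ j / j.factorial) + T * G t ^ k / k.factorial := by
    intro k
    induction k with
    | zero => intro t h0 h1; simpa using (hh0 t h0 h1).2
    | succ k IHk =>
      intro t h0 h1
      set B : ι → ℝ := fun p =>
        ε * (∑ j ∈ Finset.range k, Gm (x p) ^ j / j.factorial)
          + T * Gm (x p) ^ k / k.factorial with hBdef
      have hBval : ∀ p, B p = ε * (∑ j ∈ Finset.range k, Gm (x p) ^ j / j.factorial)
          + T * Gm (x p) ^ k / k.factorial := fun p => rfl
      have hB0 : ∀ p, 0 ≤ B p := by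
        intro p
        have g0 := hGm0 (x p)
        have h1' : 0 ≤ ∑ j ∈ Finset.range k, Gm (x p) ^ j / (j.factorial : ℝ) :=
          Finset.sum_nonneg fun j _ => div_nonneg (pow_nonneg g0 j) (by positivity)
        have h2' : 0 ≤ T * Gm (x p) ^ k / (k.factorial : ℝ) :=
          div_nonneg (mul_nonneg hT (pow_nonneg g0 k)) (by positivity)
        have := mul_nonneg hε h1'
        rw [hBval p]
        linarith
      have hBp : ∀ p, H p ≤ B p := by
        intro p
        refine hH p (B p) (hB0 p) (fun s hs hsxp => ?_)
        have hst1 : s < t₁ := hsxp.trans (hx1 p)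
        have hGsGm' : G s ≤ Gm (x p) := hGsGm s (x p) hsxp
        have g0 := hG0 s
        have gm0 := hGm0 (x p)
        calc h s ≤ ε * (∑ j ∈ Finset.range k, G s ^ j / j.factorial)
              + T * G s ^ k / k.factorial := IHk s hs hst1
          _ ≤ B p := by
              rw [hBval p]
              gcongr <;> first | exact g0 | exact hGsGm'
      have hBmax : ∀ p, B p ≤ ε * Real.exp S + T * S ^ k / k.factorial := by
        intro p
        have gm0 := hGm0 (x p)
        have gmS := hGmS (x p)
        rw [hBval p]
        have h1' : (∑ j ∈ Finset.range k, Gm (x p) ^ j / (j.factorial:ℝ)) ≤ Real.exp S := by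
          calc (∑ j ∈ Finset.range k, Gm (x p) ^ j / (j.factorial:ℝ))
              ≤ ∑ j ∈ Finset.range k, S ^ j / (j.factorial:ℝ) := by
                apply Finset.sum_le_sum; intro j _; gcongr
            _ ≤ Real.exp S := Real.sum_le_exp_of_nonneg hS0 k
        have h2' : T * Gm (x p) ^ k / (k.factorial:ℝ) ≤ T * S ^ k / (k.factorial:ℝ) := by gcongr
        have := mul_le_mul_of_nonneg_left h1' hε
        linarith
      have sumWB : Summable (fun p => if x p ≤ t then w p * B p else 0) := by
        refine (hS.mul_right (ε * Real.exp S + T * S ^ k / k.factorial)).of_nonneg_of_le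
          (fun p => ?_) (fun p => ?_)
        · split
          · exact mul_nonneg (hw p) (hB0 p)
          · exact le_refl 0
        · split
          · exact mul_le_mul_of_nonneg_left (hBmax p) (hw p)
          · exact mul_nonneg (hw p) ((hB0 p).trans (hBmax p))
      have t1 : (∑' p, if x p ≤ t then w p * H p else 0)
          ≤ ∑' p, (if x p ≤ t then w p * B p else 0) := by
        refine Summable.tsum_le_tsum (fun p => ?_) (sumWH t) sumWB
        split
        · exact mul_le_mul_of_nonneg_left (hBp p) (hw p)
        · exact le_refl 0
      have expand : (fun p => if x p ≤ t then w p * B p else 0)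
          = fun p => (∑ j ∈ Finset.range k,
              (ε / (j.factorial:ℝ)) * (if x p ≤ t then w p * Gm (x p) ^ j else 0))
            + (T / (k.factorial:ℝ)) * (if x p ≤ t then w p * Gm (x p) ^ k else 0) := by
        funext p
        split_ifs with hc
        · rw [hBval p]
          simp only [mul_add, Finset.mul_sum]
          congr 1
          exact Finset.sum_congr rfl (fun j _ => by ring)
          ring
        · simp
      have t2 : (∑' p, if x p ≤ t then w p * B p else 0)
          ≤ (∑ j ∈ Finset.range k, (ε / (j.factorial:ℝ)) * (G t ^ (j+1) / (j+1)))
            + (T / (k.factorial:ℝ)) * (G t ^ (k+1) / (k+1)) := by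
        rw [expand]
        have s1 : ∀ j : ℕ, Summable (fun p =>
            (ε / (j.factorial:ℝ)) * (if x p ≤ t then w p * Gm (x p) ^ j else 0)) :=
          fun j => (sumWGm j t).mul_left _
        have s2 : Summable (fun p =>
            (T / (k.factorial:ℝ)) * (if x p ≤ t then w p * Gm (x p) ^ k else 0)) :=
          (sumWGm k t).mul_left _
        have s3 : Summable (fun p => ∑ j ∈ Finset.range k,
            (ε / (j.factorial:ℝ)) * (if x p ≤ t then w p * Gm (x p) ^ j else 0)) :=
          summable_sum (fun j _ => s1 j)
        rw [Summable.tsum_add s3 s2]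
        apply add_le_add
        · rw [Summable.tsum_finsetSum (fun j _ => s1 j)]
          apply Finset.sum_le_sum
          intro j _
          rw [tsum_mul_left]
          exact mul_le_mul_of_nonneg_left (key j t) (by positivity)
        · rw [tsum_mul_left]
          exact mul_le_mul_of_nonneg_left (key k t) (by positivity)
      have eA : (∑ j ∈ Finset.range k, (ε / (j.factorial:ℝ)) * (G t ^ (j+1) / ((j:ℝ)+1)))
          = ε * ∑ j ∈ Finset.range k, G t ^ (j+1) / (((j+1).factorial:ℝ)) := by
        rw [Finset.mul_sum]
        refine Finset.sum_congr rfl (fun j _ => ?_)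
        rw [Nat.factorial_succ]
        have hj : ((j.factorial:ℝ)) ≠ 0 := by positivity
        have hj1 : ((j:ℝ)+1) ≠ 0 := by positivity
        push_cast
        field_simp
      have eB : (T / (k.factorial:ℝ)) * (G t ^ (k+1) / ((k:ℝ)+1))
          = T * G t ^ (k+1) / (((k+1).factorial:ℝ)) := by
        rw [Nat.factorial_succ]
        have hk : ((k.factorial:ℝ)) ≠ 0 := by positivity
        have hk1 : ((k:ℝ)+1) ≠ 0 := by positivity
        push_cast
        field_simp
      have eC : ε * (∑ j ∈ Finset.range (k+1), G t ^ j / (j.factorial:ℝ))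
          = ε * ∑ j ∈ Finset.range k, G t ^ (j+1) / (((j+1).factorial:ℝ)) + ε := by
        rw [Finset.sum_range_succ' (fun j => G t ^ j / (j.factorial:ℝ)) k]
        simp [mul_add]
      calc h t ≤ ε + ∑' p, (if x p ≤ t then w p * H p else 0) := hh t h0 h1
        _ ≤ ε + ∑' p, (if x p ≤ t then w p * B p else 0) := by linarith
        _ ≤ ε + ((∑ j ∈ Finset.range k, (ε / (j.factorial:ℝ)) * (G t ^ (j+1) / ((j:ℝ)+1)))
            + (T / (k.factorial:ℝ)) * (G t ^ (k+1) / ((k:ℝ)+1))) := by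
            have := t2
            push_cast at this ⊢
            linarith
        _ = ε * (∑ j ∈ Finset.range (k+1), G t ^ j / (j.factorial:ℝ))
            + T * G t ^ (k+1) / (((k+1).factorial:ℝ)) := by
            rw [eA, eB, eC]; ring
  intro t h0 h1
  have bound : ∀ k : ℕ, h t ≤ ε * Real.exp S + T * S ^ k / k.factorial := by
    intro k
    have c := claim k t h0 h1
    have g0 := hG0 t
    have gS := hGS t
    have h1' : (∑ j ∈ Finset.range k, G t ^ j / (j.factorial:ℝ)) ≤ Real.exp S := by
      calc (∑ j ∈ Finset.range k, G t ^ j / (j.factorial:ℝ))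
          ≤ ∑ j ∈ Finset.range k, S ^ j / (j.factorial:ℝ) := by
            apply Finset.sum_le_sum; intro j _; gcongr
        _ ≤ Real.exp S := Real.sum_le_exp_of_nonneg hS0 k
    have h2' : T * G t ^ k / (k.factorial:ℝ) ≤ T * S ^ k / (k.factorial:ℝ) := by gcongr
    have := mul_le_mul_of_nonneg_left h1' hε
    linarith
  have lim : Filter.Tendsto (fun k : ℕ => ε * Real.exp S + T * S ^ k / k.factorial)
      Filter.atTop (nhds (ε * Real.exp S)) := by
    have h1' := (FloorSemiring.tendsto_pow_div_factorial_atTop S).const_mul T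
    simpa [mul_div_assoc] using tendsto_const_nhds.add h1'
  exact ge_of_tendsto' lim bound

lemma abs_sign_le (y : ℝ) : |Real.sign y| ≤ 1 := by
  rcases lt_trichotomy y 0 with h | h | h
  · rw [Real.sign_of_neg h]; norm_num
  · simp [h, Real.sign_zero]
  · rw [Real.sign_of_pos h]; norm_num

lemma rpow_neg_inv_le_max {a b z u : ℝ} (ha : 0 < a) (hz : 0 < z) (hu1 : a ≤ u) (hu2 : u ≤ b) :
    z ^ (-1/u) ≤ max (z ^ (-1/a)) (z ^ (-1/b)) := by
  have hu0 : 0 < u := lt_of_lt_of_le ha hu1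
  have hb : 0 < b := lt_of_lt_of_le hu0 hu2
  rcases le_or_gt 1 z with h1 | h1
  · refine le_max_of_le_right ?_
    apply Real.rpow_le_rpow_of_exponent_le h1
    have : 1/b ≤ 1/u := one_div_le_one_div_of_le hu0 hu2
    rw [neg_div, neg_div]
    linarith
  · refine le_max_of_le_left ?_
    apply Real.rpow_le_rpow_of_exponent_ge hz h1.le
    have : 1/u ≤ 1/a := one_div_le_one_div_of_le ha hu1
    rw [neg_div, neg_div]
    linarith

lemma abs_spow_le {a b u : ℝ} (y : ℝ) (ha : 0 < a) (hu1 : a ≤ u) (hu2 : u ≤ b) :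
    |spow y (-1/u)| ≤ max (|y| ^ (-1/a)) (|y| ^ (-1/b)) := by
  rcases eq_or_ne y 0 with rfl | hy
  · simp only [spow, Real.sign_zero, zero_mul, abs_zero]
    exact le_max_of_le_left (Real.rpow_nonneg le_rfl _)
  · have hy' : 0 < |y| := abs_pos.2 hy
    have h2 : |spow y (-1/u)| = |y| ^ (-1/u) := by
      rw [spow, abs_mul, abs_of_nonneg (Real.rpow_nonneg (abs_nonneg y) _)]
      rcases lt_or_gt_of_ne hy with h | h
      · rw [Real.sign_of_neg h]; norm_num
      · rw [Real.sign_of_pos h]; norm_num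
    rw [h2]
    exact rpow_neg_inv_le_max ha hy' hu1 hu2

lemma spow_lipschitz {a b u v : ℝ} (y : ℝ) (ha : 0 < a) (hu : u ∈ Set.Icc a b)
    (hv : v ∈ Set.Icc a b) :
    |spow y (-1/u) - spow y (-1/v)| ≤
      max (|y| ^ (-1/a)) (|y| ^ (-1/b)) * (1 + abs (Real.log |y|)) / a^2 * |u - v| := by
  have hb : 0 < b := lt_of_lt_of_le (lt_of_lt_of_le ha hu.1) hu.2
  rcases eq_or_ne y 0 with rfl | hy
  · simp only [spow, Real.sign_zero, zero_mul, sub_zero, abs_zero]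
    have h0 : (0:ℝ) ≤ max ((0:ℝ) ^ (-1/a)) ((0:ℝ) ^ (-1/b)) :=
      le_max_of_le_left (Real.rpow_nonneg le_rfl _)
    have h1 : (0:ℝ) ≤ 1 + |Real.log 0| := by positivity
    exact mul_nonneg (div_nonneg (mul_nonneg h0 h1) (by positivity)) (abs_nonneg _)
  · have hz : 0 < |y| := abs_pos.2 hy
    set z := |y| with hzdef
    set M := max (z ^ (-1/a)) (z ^ (-1/b)) with hM
    set K := M * (1 + |Real.log z|) / a^2 with hK
    -- derivative bound for φ s = z ^ (-1/s) on Icc a b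
    have hder : ∀ s ∈ Set.Icc a b, HasDerivWithinAt (fun s : ℝ => z ^ (-1/s))
        (z ^ (-1/s) * (Real.log z * (s^2)⁻¹)) (Set.Icc a b) s := by
      intro s hs
      have hs0 : s ≠ 0 := (lt_of_lt_of_le ha hs.1).ne'
      have h1 : HasDerivAt (fun s : ℝ => -1/s) ((s^2)⁻¹) s := by
        have := (hasDerivAt_inv hs0).const_mul (-1 : ℝ)
        have e : (fun s : ℝ => -1/s) = fun y => -1 * y⁻¹ := by funext x; ring
        rw [e]; exact this.congr_deriv (by ring)
      have h2 : HasDerivAt (fun s : ℝ => Real.log z * (-1/s)) (Real.log z * (s^2)⁻¹) s :=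
        h1.const_mul (Real.log z)
      have h3 : HasDerivAt (fun s : ℝ => Real.exp (Real.log z * (-1/s)))
          (Real.exp (Real.log z * (-1/s)) * (Real.log z * (s^2)⁻¹)) s := h2.exp
      have h4 : (fun s : ℝ => Real.exp (Real.log z * (-1/s))) = fun s : ℝ => z ^ (-1/s) := by
        funext s'
        rw [Real.rpow_def_of_pos hz]
      rw [h4] at h3
      rw [show Real.exp (Real.log z * (-1/s)) = z ^ (-1/s) from by rw [Real.rpow_def_of_pos hz]] at h3
      exact h3.hasDerivWithinAt
    have hbound : ∀ s ∈ Set.Icc a b, ‖z ^ (-1/s) * (Real.log z * (s^2)⁻¹)‖ ≤ K := by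
      intro s hs
      have hs0 : 0 < s := lt_of_lt_of_le ha hs.1
      have h1 : z ^ (-1/s) ≤ M := rpow_neg_inv_le_max ha hz hs.1 hs.2
      have h2 : (s^2)⁻¹ ≤ (a^2)⁻¹ := by
        apply inv_anti₀ (by positivity)
        exact pow_le_pow_left₀ ha.le hs.1 2
      have h3 : (0:ℝ) ≤ z ^ (-1/s) := Real.rpow_nonneg hz.le _
      rw [Real.norm_eq_abs, abs_mul, abs_mul, abs_of_nonneg h3, abs_of_nonneg (by positivity : (0:ℝ) ≤ (s^2)⁻¹)]
      rw [hK]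
      have h5 : |Real.log z| ≤ 1 + |Real.log z| := by linarith [abs_nonneg (Real.log z)]
      calc z ^ (-1/s) * (|Real.log z| * (s^2)⁻¹)
          ≤ M * ((1 + |Real.log z|) * (a^2)⁻¹) := by
            apply mul_le_mul h1 _ (by positivity) (le_trans h3 h1)
            apply mul_le_mul h5 h2 (by positivity) (by positivity)
        _ = M * (1 + |Real.log z|) / a^2 := by ring
    have hmain := Convex.norm_image_sub_le_of_norm_hasDerivWithin_le hder hbound
      (convex_Icc a b) hv hu
    have hsign : |spow y (-1/u) - spow y (-1/v)|
        = |Real.sign y| * |z ^ (-1/u) - z ^ (-1/v)| := by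
      rw [spow, spow, ← mul_sub, abs_mul]
    rw [hsign]
    calc |Real.sign y| * |z ^ (-1/u) - z ^ (-1/v)| ≤ 1 * |z ^ (-1/u) - z ^ (-1/v)| := by
          apply mul_le_mul_of_nonneg_right (abs_sign_le y) (abs_nonneg _)
      _ = |z ^ (-1/u) - z ^ (-1/v)| := one_mul _
      _ ≤ K * |u - v| := by
          have := hmain
          rw [Real.norm_eq_abs, Real.norm_eq_abs] at this
          exact this
      _ = M * (1 + |Real.log z|) / a^2 * |u - v| := by rw [hK]

lemma abs_lim_sub_le {f g : ℝ → ℝ} {u Lf Lg B t₀ : ℝ} (htu : t₀ < u)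
    (hf : Filter.Tendsto f (nhdsWithin u (Set.Iio u)) (nhds Lf))
    (hg : Filter.Tendsto g (nhdsWithin u (Set.Iio u)) (nhds Lg))
    (hb : ∀ s, t₀ ≤ s → s < u → |f s - g s| ≤ B) : |Lf - Lg| ≤ B := by
  refine le_of_tendsto ((hf.sub hg).abs) ?_
  filter_upwards [Ioo_mem_nhdsLT_of_mem (show u ∈ Set.Ioc t₀ u from ⟨htu, le_refl u⟩)] with s hs
  exact hb s hs.1.le hs.2

set_option maxHeartbeats 1000000 in
/-- The truncated solutions converge uniformly to the unique solution of the full equation. -/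
theorem stmt7 (a b b' t₀ t₁ a₀ : ℝ) (ha : 0 < a) (hab : a < b) (hbb' : b < b') (hb1 : b' < 1)
    (ht : t₀ < t₁)
    (α : ℝ → ℝ) (hrange : ∀ x, α x ∈ Set.Icc a b) (hsmooth : ContDiff ℝ 1 α)
    (hbd : ∃ C, ∀ x, |deriv α x| ≤ C)
    (Λ : Set (ℝ × ℝ)) (hcount : Λ.Countable)
    (hsubΛ : Λ ⊆ Set.Ioo t₀ t₁ ×ˢ (Set.univ : Set ℝ))
    (hΛ : Summable fun p : Λ => |(p : ℝ × ℝ).2| ^ (-1 / b'))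
    (F : ℕ → ℝ → ℝ)
    (hF : ∀ n : ℕ, CadlagOn (F n) t₀ t₁ ∧
      ∀ t ∈ Set.Ico t₀ t₁, F n t = a₀ + jumpSumTrunc α Λ n t₀ t (F n)) :
    ∃ f : ℝ → ℝ, CadlagOn f t₀ t₁ ∧
      (∀ t ∈ Set.Ico t₀ t₁, f t = a₀ + jumpSum α Λ t₀ t f) ∧
      TendstoUniformlyOn F f atTop (Set.Ico t₀ t₁) ∧
      ∀ g : ℝ → ℝ, CadlagOn g t₀ t₁ →
        (∀ t ∈ Set.Ico t₀ t₁, g t = a₀ + jumpSum α Λ t₀ t g) →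
        Set.EqOn g f (Set.Ico t₀ t₁) := by
  classical
  obtain ⟨C₀, hC₀⟩ := hbd
  set C : ℝ := max C₀ 0 with hCdef
  have hC : ∀ ξ, |deriv α ξ| ≤ C := fun ξ => (hC₀ ξ).trans (le_max_left _ _)
  have hC0 : (0:ℝ) ≤ C := le_max_right _ _
  have hb0 : 0 < b := ha.trans hab
  have hb'0 : 0 < b' := hb0.trans hbb'
  haveI : Countable ↥Λ := hcount.to_subtype
  have hαlip : ∀ ξ η : ℝ, |α ξ - α η| ≤ C * |ξ - η| := by
    intro ξ η
    have hdiffα : ∀ z : ℝ, DifferentiableAt ℝ α z := fun z =>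
      (hsmooth.differentiable one_ne_zero).differentiableAt
    have h2 := Convex.norm_image_sub_le_of_norm_deriv_le (f := α) (s := Set.univ)
      (fun z _ => hdiffα z) (fun z _ => by rw [Real.norm_eq_abs]; exact hC z)
      convex_univ (Set.mem_univ η) (Set.mem_univ ξ)
    simpa [Real.norm_eq_abs] using h2
  set v : ↥Λ → ℝ := fun p => max (|(p:ℝ×ℝ).2| ^ (-1/a)) (|(p:ℝ×ℝ).2| ^ (-1/b)) with hvdef
  set w : ↥Λ → ℝ := fun p => C * (v p * (1 + abs (Real.log |(p:ℝ×ℝ).2|)) / a^2) with hwdef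
  have hv0 : ∀ p, 0 ≤ v p := fun p => le_max_of_le_left (Real.rpow_nonneg (abs_nonneg _) _)
  have hw0 : ∀ p, 0 ≤ w p := by
    intro p
    have h1 : (0:ℝ) ≤ 1 + abs (Real.log |(p:ℝ×ℝ).2|) := by positivity
    have := hv0 p
    rw [hwdef]
    positivity
  have hra : (-1/a : ℝ) ≠ 0 := (div_neg_of_neg_of_pos (by norm_num) ha).ne
  have hrb : (-1/b : ℝ) ≠ 0 := (div_neg_of_neg_of_pos (by norm_num) hb0).ne
  have hrb' : (-1/b' : ℝ) ≠ 0 := (div_neg_of_neg_of_pos (by norm_num) hb'0).ne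
  have hu0 : ∀ p : ↥Λ, (0:ℝ) ≤ |(p:ℝ×ℝ).2| ^ (-1/b') := fun p => Real.rpow_nonneg (abs_nonneg _) _
  have hfin : {p : ↥Λ | 1 ≤ |(p:ℝ×ℝ).2| ^ (-1/b')}.Finite := by
    have h1 := hΛ.tendsto_cofinite_zero
    have h2 : Set.Ioo (-1:ℝ) 1 ∈ nhds (0:ℝ) := Ioo_mem_nhds (by norm_num) (by norm_num)
    have h3 := h1 h2
    rw [mem_map, mem_cofinite] at h3
    refine h3.subset (fun p hp => ?_)
    simp only [Set.mem_compl_iff, Set.mem_preimage, Set.mem_Ioo, not_and_or, not_lt]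
    right
    exact hp
  set δe : ℝ := 1/b - 1/b' with hδedef
  have hδe : 0 < δe := by
    rw [hδedef]
    have := one_div_lt_one_div_of_lt hb0 hbb'
    linarith
  set Ke : ℝ := 1 + 1/δe with hKedef
  have hKe0 : 0 ≤ Ke := by rw [hKedef]; positivity
  have hcompare : ∀ p : ↥Λ, |(p:ℝ×ℝ).2| ^ (-1/b') < 1 →
      v p * (1 + abs (Real.log |(p:ℝ×ℝ).2|)) ≤ Ke * |(p:ℝ×ℝ).2| ^ (-1/b') := by
    intro p hp
    rcases eq_or_ne ((p:ℝ×ℝ).2) 0 with h0 | h0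
    · have habs0 : |(p:ℝ×ℝ).2| = 0 := by rw [h0]; simp
      have hv00 : v p = 0 := by
        rw [hvdef]
        simp [habs0, Real.zero_rpow hra, Real.zero_rpow hrb]
      rw [hv00, habs0, Real.zero_rpow hrb']
      simp
    · have hz : 0 < |(p:ℝ×ℝ).2| := abs_pos.2 h0
      have hz1 : 1 < |(p:ℝ×ℝ).2| := by
        by_contra hle
        push_neg at hle
        have := Real.one_le_rpow_of_pos_of_le_one_of_nonpos hz hle
          (le_of_lt (div_neg_of_neg_of_pos (by norm_num : (-1:ℝ) < 0) hb'0))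
        linarith
      have hv_eq : v p = |(p:ℝ×ℝ).2| ^ (-1/b) := by
        rw [hvdef]
        apply max_eq_right
        apply Real.rpow_le_rpow_of_exponent_le hz1.le
        have : 1/b ≤ 1/a := one_div_le_one_div_of_le ha hab.le
        rw [neg_div, neg_div]
        linarith
      have hlog0 : 0 ≤ Real.log |(p:ℝ×ℝ).2| := Real.log_nonneg hz1.le
      have hlogz : abs (Real.log |(p:ℝ×ℝ).2|) = Real.log |(p:ℝ×ℝ).2| := abs_of_nonneg hlog0
      have hzd : (0:ℝ) < |(p:ℝ×ℝ).2| ^ δe := Real.rpow_pos_of_pos hz _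
      have h1z : (1:ℝ) ≤ |(p:ℝ×ℝ).2| ^ δe := by
        calc (1:ℝ) = |(p:ℝ×ℝ).2| ^ (0:ℝ) := (Real.rpow_zero _).symm
          _ ≤ |(p:ℝ×ℝ).2| ^ δe := Real.rpow_le_rpow_of_exponent_le hz1.le hδe.le
      have hlog_le : Real.log |(p:ℝ×ℝ).2| ≤ |(p:ℝ×ℝ).2| ^ δe / δe := by
        have h2 : Real.log (|(p:ℝ×ℝ).2| ^ δe) = δe * Real.log |(p:ℝ×ℝ).2| :=
          Real.log_rpow hz δe
        have h3 := Real.log_le_sub_one_of_pos hzd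
        rw [h2] at h3
        rw [le_div_iff₀ hδe]
        nlinarith
      have hKey : 1 + Real.log |(p:ℝ×ℝ).2| ≤ Ke * |(p:ℝ×ℝ).2| ^ δe := by
        have hq : Ke * |(p:ℝ×ℝ).2| ^ δe = |(p:ℝ×ℝ).2| ^ δe + |(p:ℝ×ℝ).2| ^ δe / δe := by
          rw [hKedef]; ring
        rw [hq]
        linarith
      have hzb : (0:ℝ) ≤ |(p:ℝ×ℝ).2| ^ (-1/b) := Real.rpow_nonneg hz.le _
      rw [hv_eq, hlogz]
      calc |(p:ℝ×ℝ).2| ^ (-1/b) * (1 + Real.log |(p:ℝ×ℝ).2|)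
          ≤ |(p:ℝ×ℝ).2| ^ (-1/b) * (Ke * |(p:ℝ×ℝ).2| ^ δe) :=
            mul_le_mul_of_nonneg_left hKey hzb
        _ = Ke * (|(p:ℝ×ℝ).2| ^ (-1/b) * |(p:ℝ×ℝ).2| ^ δe) := by ring
        _ = Ke * |(p:ℝ×ℝ).2| ^ (-1/b + δe) := by rw [← Real.rpow_add hz]
        _ = Ke * |(p:ℝ×ℝ).2| ^ (-1/b') := by
            congr 1
            rw [hδedef]
            ring
  have haux : ∀ g : ↥Λ → ℝ, (∀ p, 0 ≤ g p) →
      (∀ p : ↥Λ, |(p:ℝ×ℝ).2| ^ (-1/b') < 1 → g p ≤ Ke * |(p:ℝ×ℝ).2| ^ (-1/b')) → Summable g := by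
    intro g hg0 hgle
    have hs1 : Summable (fun p : ↥Λ => Ke * |(p:ℝ×ℝ).2| ^ (-1/b')
        + (if p ∈ hfin.toFinset then g p else 0)) :=
      (hΛ.mul_left Ke).add (summable_of_ne_finset_zero (s := hfin.toFinset) (fun p hp => if_neg hp))
    refine hs1.of_nonneg_of_le hg0 (fun p => ?_)
    by_cases hp : 1 ≤ |(p:ℝ×ℝ).2| ^ (-1/b')
    · have hmem : p ∈ hfin.toFinset := hfin.mem_toFinset.2 hp
      rw [if_pos hmem]
      have : 0 ≤ Ke * |(p:ℝ×ℝ).2| ^ (-1/b') := mul_nonneg hKe0 (hu0 p)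
      linarith
    · push_neg at hp
      have h1 := hgle p hp
      have h2 : (0:ℝ) ≤ (if p ∈ hfin.toFinset then g p else 0) := by
        split
        · exact hg0 p
        · exact le_refl 0
      linarith
  have hvlsum : Summable (fun p : ↥Λ => v p * (1 + abs (Real.log |(p:ℝ×ℝ).2|))) :=
    haux _ (fun p => mul_nonneg (hv0 p) (by positivity)) (fun p hp => hcompare p hp)
  have hvsum : Summable v := by
    refine haux v hv0 (fun p hp => le_trans ?_ (hcompare p hp))
    exact le_mul_of_one_le_right (hv0 p) (le_add_of_nonneg_right (abs_nonneg _))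
  have hwsum : Summable w := by
    have h1 : w = fun p => (C / a^2) * (v p * (1 + abs (Real.log |(p:ℝ×ℝ).2|))) := by
      funext p; rw [hwdef]; ring
    rw [h1]
    exact hvlsum.mul_left _
  set V : ℝ := ∑' p, v p with hVdef
  set W : ℝ := ∑' p, w p with hWdef
  have hV0 : 0 ≤ V := tsum_nonneg hv0
  have hW0 : 0 ≤ W := tsum_nonneg hw0
  set E : ℕ → ℝ := fun m => ∑' p : ↥Λ, if (m:ℝ) < |(p:ℝ×ℝ).2| then v p else 0 with hEdef
  have hEsum : ∀ m : ℕ, Summable (fun p : ↥Λ => if (m:ℝ) < |(p:ℝ×ℝ).2| then v p else 0) := by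
    intro m
    refine hvsum.of_nonneg_of_le (fun p => ?_) (fun p => ?_)
    · split
      · exact hv0 p
      · exact le_refl 0
    · split
      · exact le_refl _
      · exact hv0 p
  have hE0 : ∀ m, 0 ≤ E m := by
    intro m; rw [hEdef]
    exact tsum_nonneg (fun p => by split; exacts [hv0 p, le_refl 0])
  have hEanti : ∀ m n : ℕ, m ≤ n → E n ≤ E m := by
    intro m n hmn
    rw [hEdef]
    refine Summable.tsum_le_tsum (fun p => ?_) (hEsum n) (hEsum m)
    split
    · rename_i hc
      rw [if_pos (lt_of_le_of_lt (by exact_mod_cast Nat.cast_le.2 hmn) hc)]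
    · split
      · exact hv0 p
      · exact le_refl 0
  have hElim : Tendsto E atTop (nhds 0) := by
    rw [Metric.tendsto_atTop]
    intro δ hδ
    have h1 := tendsto_tsum_compl_atTop_zero v
    have h2 := (Metric.tendsto_nhds.1 h1) δ hδ
    rw [eventually_atTop] at h2
    obtain ⟨F₀, hF₀⟩ := h2
    refine ⟨F₀.sup (fun p => ⌈|(p:ℝ×ℝ).2|⌉₊), fun m hm => ?_⟩
    rw [Real.dist_eq, sub_zero, abs_of_nonneg (hE0 m)]
    have hcompl := hF₀ F₀ le_rfl
    rw [Real.dist_eq, sub_zero] at hcompl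
    have hcompl' : (∑' p : {x : ↥Λ // x ∉ F₀}, v ↑p) < δ :=
      lt_of_le_of_lt (le_abs_self _) hcompl
    have hzero : ∀ p ∈ F₀, (if (m:ℝ) < |(p:ℝ×ℝ).2| then v p else 0) = 0 := by
      intro p hp
      rw [if_neg]
      have h3 : |(p:ℝ×ℝ).2| ≤ (⌈|(p:ℝ×ℝ).2|⌉₊ : ℝ) := Nat.le_ceil _
      have h4 : (⌈|(p:ℝ×ℝ).2|⌉₊ : ℕ) ≤ m :=
        le_trans (Finset.le_sup (f := fun p : ↥Λ => ⌈|(p:ℝ×ℝ).2|⌉₊) hp) hm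
      have h5 : ((⌈|(p:ℝ×ℝ).2|⌉₊ : ℕ) : ℝ) ≤ (m:ℝ) := by exact_mod_cast h4
      exact not_lt.2 (h3.trans h5)
    have hsupp : Function.support (fun p : ↥Λ => if (m:ℝ) < |(p:ℝ×ℝ).2| then v p else 0)
        ⊆ {p : ↥Λ | p ∉ F₀} := by
      intro p hp
      simp only [Function.mem_support] at hp
      intro hmem
      exact hp (hzero p hmem)
    have hEeq : E m = ∑' p : {p : ↥Λ // p ∉ F₀}, (if (m:ℝ) < |((p:↥Λ):ℝ×ℝ).2| then v ↑p else 0) := by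
      rw [hEdef]
      exact (tsum_subtype_eq_of_support_subset hsupp).symm
    rw [hEeq]
    refine lt_of_le_of_lt (Summable.tsum_le_tsum (fun p => ?_) ((hEsum m).subtype _) (hvsum.subtype _)) hcompl'
    split
    · exact le_refl _
    · exact hv0 _
  have hX : ∀ p : ↥Λ, (p:ℝ×ℝ).1 ∈ Set.Ioo t₀ t₁ := fun p => (hsubΛ p.2).1
  have hterm_abs : ∀ (p : ↥Λ) (ξ : ℝ), |spow (p:ℝ×ℝ).2 (-1 / α ξ)| ≤ v p := by
    intro p ξ
    exact abs_spow_le _ ha (hrange ξ).1 (hrange ξ).2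
  have hterm_lip : ∀ (p : ↥Λ) (ξ η : ℝ),
      |spow (p:ℝ×ℝ).2 (-1 / α ξ) - spow (p:ℝ×ℝ).2 (-1 / α η)| ≤ w p * |ξ - η| := by
    intro p ξ η
    have h1 := spow_lipschitz (a := a) (b := b) ((p:ℝ×ℝ).2) ha (hrange ξ) (hrange η)
    have h2 := hαlip ξ η
    have hL0 : (0:ℝ) ≤ max (|(p:ℝ×ℝ).2| ^ (-1/a)) (|(p:ℝ×ℝ).2| ^ (-1/b))
        * (1 + abs (Real.log |(p:ℝ×ℝ).2|)) / a^2 := by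
      have h3 : (0:ℝ) ≤ max (|(p:ℝ×ℝ).2| ^ (-1/a)) (|(p:ℝ×ℝ).2| ^ (-1/b)) :=
        le_max_of_le_left (Real.rpow_nonneg (abs_nonneg _) _)
      have h4 : (0:ℝ) ≤ 1 + abs (Real.log |(p:ℝ×ℝ).2|) := by positivity
      positivity
    calc |spow (p:ℝ×ℝ).2 (-1 / α ξ) - spow (p:ℝ×ℝ).2 (-1 / α η)|
        ≤ max (|(p:ℝ×ℝ).2| ^ (-1/a)) (|(p:ℝ×ℝ).2| ^ (-1/b))
          * (1 + abs (Real.log |(p:ℝ×ℝ).2|)) / a^2 * |α ξ - α η| := h1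
      _ ≤ max (|(p:ℝ×ℝ).2| ^ (-1/a)) (|(p:ℝ×ℝ).2| ^ (-1/b))
          * (1 + abs (Real.log |(p:ℝ×ℝ).2|)) / a^2 * (C * |ξ - η|) :=
          mul_le_mul_of_nonneg_left h2 hL0
      _ = w p * |ξ - η| := by rw [hwdef, hvdef]; ring
  have hsum_of_le : ∀ g : ↥Λ → ℝ, (∀ p, |g p| ≤ v p) → Summable g := by
    intro g hg
    refine Summable.of_abs (hvsum.of_nonneg_of_le (fun p => abs_nonneg _) hg)
  have hFleft : ∀ (n : ℕ) (u : ℝ), u ∈ Set.Ioc t₀ t₁ →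
      Tendsto (F n) (nhdsWithin u (Set.Iio u)) (nhds (Function.leftLim (F n) u)) := by
    intro n u hu
    obtain ⟨L, hL⟩ := (hF n).1.2 u hu
    rwa [leftLim_eq_of_tendsto hL]
  have hfbd_gen : ∀ (c : ↥Λ → Prop) (φ : ℝ → ℝ) (t : ℝ),
      |(∑' p : ↥Λ, if c p ∧ (p:ℝ×ℝ).1 ∈ Set.Ioc t₀ t
        then spow (p:ℝ×ℝ).2 (-1 / α (Function.leftLim φ (p:ℝ×ℝ).1)) else 0)| ≤ V := by
    intro c φ t
    have habs : ∀ p : ↥Λ, |if c p ∧ (p:ℝ×ℝ).1 ∈ Set.Ioc t₀ t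
        then spow (p:ℝ×ℝ).2 (-1 / α (Function.leftLim φ (p:ℝ×ℝ).1)) else 0| ≤ v p := by
      intro p
      split
      · exact hterm_abs p _
      · simpa using hv0 p
    have hsum := hsum_of_le _ habs
    calc |(∑' p : ↥Λ, if c p ∧ (p:ℝ×ℝ).1 ∈ Set.Ioc t₀ t
          then spow (p:ℝ×ℝ).2 (-1 / α (Function.leftLim φ (p:ℝ×ℝ).1)) else 0)|
        ≤ ∑' p : ↥Λ, |if c p ∧ (p:ℝ×ℝ).1 ∈ Set.Ioc t₀ t
          then spow (p:ℝ×ℝ).2 (-1 / α (Function.leftLim φ (p:ℝ×ℝ).1)) else 0| := by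
          simpa [Real.norm_eq_abs] using norm_tsum_le_tsum_norm (f := fun p : ↥Λ =>
            if c p ∧ (p:ℝ×ℝ).1 ∈ Set.Ioc t₀ t
            then spow (p:ℝ×ℝ).2 (-1 / α (Function.leftLim φ (p:ℝ×ℝ).1)) else 0) hsum.abs
      _ ≤ ∑' p : ↥Λ, v p := Summable.tsum_le_tsum habs hsum.abs hvsum
      _ = V := rfl
  have hJgen : ∀ (t : ℝ) (c d : ↥Λ → Prop), (∀ p, d p → c p) →
      ∀ (φ ψ : ℝ → ℝ) (D : ℝ), 0 ≤ D →
      (∀ p : ↥Λ, |Function.leftLim φ (p:ℝ×ℝ).1 - Function.leftLim ψ (p:ℝ×ℝ).1| ≤ D) →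
      |(∑' p : ↥Λ, if c p ∧ (p:ℝ×ℝ).1 ∈ Set.Ioc t₀ t
          then spow (p:ℝ×ℝ).2 (-1 / α (Function.leftLim φ (p:ℝ×ℝ).1)) else 0)
        - (∑' p : ↥Λ, if d p ∧ (p:ℝ×ℝ).1 ∈ Set.Ioc t₀ t
          then spow (p:ℝ×ℝ).2 (-1 / α (Function.leftLim ψ (p:ℝ×ℝ).1)) else 0)|
      ≤ (∑' p : ↥Λ, if (p:ℝ×ℝ).1 ≤ t then
            w p * |Function.leftLim φ (p:ℝ×ℝ).1 - Function.leftLim ψ (p:ℝ×ℝ).1| else 0)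
        + (∑' p : ↥Λ, if ¬ d p then v p else 0) := by
    intro t c d hdc φ ψ D hD0 hD
    set dc : ↥Λ → ℝ := fun p => if c p ∧ (p:ℝ×ℝ).1 ∈ Set.Ioc t₀ t
      then spow (p:ℝ×ℝ).2 (-1 / α (Function.leftLim φ (p:ℝ×ℝ).1)) else 0 with hdcdef
    set dd : ↥Λ → ℝ := fun p => if d p ∧ (p:ℝ×ℝ).1 ∈ Set.Ioc t₀ t
      then spow (p:ℝ×ℝ).2 (-1 / α (Function.leftLim ψ (p:ℝ×ℝ).1)) else 0 with hdddef
    set b1 : ↥Λ → ℝ := fun p => if (p:ℝ×ℝ).1 ≤ t then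
      w p * |Function.leftLim φ (p:ℝ×ℝ).1 - Function.leftLim ψ (p:ℝ×ℝ).1| else 0 with hb1def
    set b2 : ↥Λ → ℝ := fun p => if ¬ d p then v p else 0 with hb2def
    have hcabs : ∀ p, |dc p| ≤ v p := by
      intro p
      rw [hdcdef]
      beta_reduce
      split
      · exact hterm_abs p _
      · simpa using hv0 p
    have hdabs : ∀ p, |dd p| ≤ v p := by
      intro p
      rw [hdddef]
      beta_reduce
      split
      · exact hterm_abs p _
      · simpa using hv0 p
    have hsc : Summable dc := hsum_of_le _ hcabs
    have hsd : Summable dd := hsum_of_le _ hdabs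
    have hb10 : ∀ p, 0 ≤ b1 p := by
      intro p
      rw [hb1def]
      beta_reduce
      split
      · exact mul_nonneg (hw0 p) (abs_nonneg _)
      · exact le_refl 0
    have hb20 : ∀ p, 0 ≤ b2 p := by
      intro p
      rw [hb2def]
      beta_reduce
      split
      · exact hv0 p
      · exact le_refl 0
    have hb1sum : Summable b1 := by
      refine (hwsum.mul_right D).of_nonneg_of_le hb10 (fun p => ?_)
      rw [hb1def]
      beta_reduce
      split
      · exact mul_le_mul_of_nonneg_left (hD p) (hw0 p)
      · exact mul_nonneg (hw0 p) hD0
    have hb2sum : Summable b2 := by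
      refine hvsum.of_nonneg_of_le hb20 (fun p => ?_)
      rw [hb2def]
      beta_reduce
      split
      · exact le_refl _
      · exact hv0 p
    have hpt : ∀ p, |dc p - dd p| ≤ b1 p + b2 p := by
      intro p
      by_cases hxt : (p:ℝ×ℝ).1 ∈ Set.Ioc t₀ t
      · by_cases hdp : d p
        · have hcp : c p := hdc p hdp
          have e1 : dc p = spow (p:ℝ×ℝ).2 (-1 / α (Function.leftLim φ (p:ℝ×ℝ).1)) := by
            rw [hdcdef]; beta_reduce; exact if_pos ⟨hcp, hxt⟩
          have e2 : dd p = spow (p:ℝ×ℝ).2 (-1 / α (Function.leftLim ψ (p:ℝ×ℝ).1)) := by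
            rw [hdddef]; beta_reduce; exact if_pos ⟨hdp, hxt⟩
          have e3 : b1 p = w p * |Function.leftLim φ (p:ℝ×ℝ).1 - Function.leftLim ψ (p:ℝ×ℝ).1| := by
            rw [hb1def]; beta_reduce; exact if_pos hxt.2
          have h4 := hterm_lip p (Function.leftLim φ (p:ℝ×ℝ).1) (Function.leftLim ψ (p:ℝ×ℝ).1)
          rw [e1, e2]
          calc |spow (p:ℝ×ℝ).2 (-1 / α (Function.leftLim φ (p:ℝ×ℝ).1))
              - spow (p:ℝ×ℝ).2 (-1 / α (Function.leftLim ψ (p:ℝ×ℝ).1))|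
              ≤ w p * |Function.leftLim φ (p:ℝ×ℝ).1 - Function.leftLim ψ (p:ℝ×ℝ).1| := h4
            _ = b1 p := e3.symm
            _ ≤ b1 p + b2 p := le_add_of_nonneg_right (hb20 p)
        · have e2 : dd p = 0 := by
            rw [hdddef]; beta_reduce; exact if_neg (fun h => hdp h.1)
          have e4 : b2 p = v p := by rw [hb2def]; beta_reduce; exact if_pos hdp
          rw [e2, sub_zero]
          calc |dc p| ≤ v p := hcabs p
            _ = b2 p := e4.symm
            _ ≤ b1 p + b2 p := le_add_of_nonneg_left (hb10 p)
      · have e1 : dc p = 0 := by rw [hdcdef]; beta_reduce; exact if_neg (fun h => hxt h.2)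
        have e2 : dd p = 0 := by rw [hdddef]; beta_reduce; exact if_neg (fun h => hxt h.2)
        rw [e1, e2, sub_zero, abs_zero]
        exact add_nonneg (hb10 p) (hb20 p)
    calc |(∑' p, dc p) - (∑' p, dd p)| = |∑' p, (dc p - dd p)| := by
          rw [Summable.tsum_sub hsc hsd]
      _ ≤ ∑' p, |dc p - dd p| := by
          simpa [Real.norm_eq_abs] using norm_tsum_le_tsum_norm (f := fun p => dc p - dd p)
            (hsc.sub hsd).abs
      _ ≤ ∑' p, (b1 p + b2 p) := Summable.tsum_le_tsum hpt (hsc.sub hsd).abs (hb1sum.add hb2sum)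
      _ = (∑' p, b1 p) + (∑' p, b2 p) := Summable.tsum_add hb1sum hb2sum
  have hFbound : ∀ (n : ℕ) (t : ℝ), t ∈ Set.Ico t₀ t₁ → |F n t| ≤ |a₀| + V := by
    intro n t htI
    rw [(hF n).2 t htI]
    have h1 : |jumpSumTrunc α Λ (n:ℝ) t₀ t (F n)| ≤ V := by
      have h2 := hfbd_gen (fun p : ↥Λ => |(p:ℝ×ℝ).2| ≤ (n:ℝ)) (F n) t
      simpa [jumpSumTrunc] using h2
    calc |a₀ + jumpSumTrunc α Λ (n:ℝ) t₀ t (F n)|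
        ≤ |a₀| + |jumpSumTrunc α Λ (n:ℝ) t₀ t (F n)| := abs_add_le _ _
      _ ≤ |a₀| + V := by linarith
  have hjump_bd : ∀ (t : ℝ), t ∈ Set.Ico t₀ t₁ → ∀ (m n : ℕ), m ≤ n →
      |jumpSumTrunc α Λ (n:ℝ) t₀ t (F n) - jumpSumTrunc α Λ (m:ℝ) t₀ t (F m)|
        ≤ E m + ∑' p : ↥Λ, (if (p:ℝ×ℝ).1 ≤ t then
            w p * |Function.leftLim (F n) (p:ℝ×ℝ).1 - Function.leftLim (F m) (p:ℝ×ℝ).1| else 0) := by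
    intro t htIco m n hmn
    have hD : ∀ p : ↥Λ, |Function.leftLim (F n) (p:ℝ×ℝ).1 - Function.leftLim (F m) (p:ℝ×ℝ).1|
        ≤ 2*(|a₀|+V) := by
      intro p
      have hu : (p:ℝ×ℝ).1 ∈ Set.Ioc t₀ t₁ := ⟨(hX p).1, (hX p).2.le⟩
      refine abs_lim_sub_le hu.1 (hFleft n _ hu) (hFleft m _ hu) (fun s hs hs' => ?_)
      have hsI : s ∈ Set.Ico t₀ t₁ := ⟨hs, hs'.trans (hX p).2⟩
      calc |F n s - F m s| ≤ |F n s| + |F m s| := abs_sub _ _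
        _ ≤ (|a₀| + V) + (|a₀| + V) := add_le_add (hFbound n s hsI) (hFbound m s hsI)
        _ = 2*(|a₀|+V) := by ring
    have h2 := hJgen t (fun p : ↥Λ => |(p:ℝ×ℝ).2| ≤ (n:ℝ)) (fun p : ↥Λ => |(p:ℝ×ℝ).2| ≤ (m:ℝ))
      (fun p hp => le_trans hp (by exact_mod_cast Nat.cast_le.2 hmn)) (F n) (F m)
      (2*(|a₀|+V)) (by positivity) hD
    have h3 : (∑' p : ↥Λ, if ¬ (|(p:ℝ×ℝ).2| ≤ (m:ℝ)) then v p else 0) = E m := by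
      rw [hEdef]
      exact tsum_congr (fun p => by simp [not_le])
    have h4 : |jumpSumTrunc α Λ (n:ℝ) t₀ t (F n) - jumpSumTrunc α Λ (m:ℝ) t₀ t (F m)| ≤
        (∑' p : ↥Λ, if (p:ℝ×ℝ).1 ≤ t then
          w p * |Function.leftLim (F n) (p:ℝ×ℝ).1 - Function.leftLim (F m) (p:ℝ×ℝ).1| else 0)
        + (∑' p : ↥Λ, if ¬ (|(p:ℝ×ℝ).2| ≤ (m:ℝ)) then v p else 0) := by
      simpa [jumpSumTrunc] using h2
    rw [h3] at h4
    linarith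
  have hcauchy_bound : ∀ m n : ℕ, m ≤ n → ∀ t, t₀ ≤ t → t < t₁ →
      |F n t - F m t| ≤ E m * Real.exp W := by
    intro m n hmn
    have hT2 : (0:ℝ) ≤ 2*(|a₀|+V) := by positivity
    have hgr := gronwall (ι := ↥Λ) w (fun p => (p:ℝ×ℝ).1) t₀ t₁ hw0 hwsum (fun p => (hX p).2)
      (fun t => |F n t - F m t|)
      (fun p => |Function.leftLim (F n) (p:ℝ×ℝ).1 - Function.leftLim (F m) (p:ℝ×ℝ).1|)
      (E m) (2*(|a₀|+V)) (hE0 m) hT2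
      (fun t h0 h1 => ⟨abs_nonneg _, by
        calc |F n t - F m t| ≤ |F n t| + |F m t| := abs_sub _ _
          _ ≤ (|a₀|+V) + (|a₀|+V) := add_le_add (hFbound n t ⟨h0,h1⟩) (hFbound m t ⟨h0,h1⟩)
          _ = 2*(|a₀|+V) := by ring⟩)
      (fun p => abs_nonneg _)
      (fun p B hB0 hsB => by
        have hu : (p:ℝ×ℝ).1 ∈ Set.Ioc t₀ t₁ := ⟨(hX p).1, (hX p).2.le⟩
        exact abs_lim_sub_le hu.1 (hFleft n _ hu) (hFleft m _ hu) hsB)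
      (fun t h0 h1 => by
        have e3 : F n t - F m t
            = jumpSumTrunc α Λ (n:ℝ) t₀ t (F n) - jumpSumTrunc α Λ (m:ℝ) t₀ t (F m) := by
          rw [(hF n).2 t ⟨h0,h1⟩, (hF m).2 t ⟨h0,h1⟩]; ring
        show |F n t - F m t| ≤ _
        rw [e3]
        exact hjump_bd t ⟨h0,h1⟩ m n hmn)
    intro t h0 h1
    exact hgr t h0 h1
  have hUC : UniformCauchySeqOn F atTop (Set.Ico t₀ t₁) := by
    rw [Metric.uniformCauchySeqOn_iff]
    intro δ hδ
    have hexp : 0 < Real.exp W := Real.exp_pos W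
    obtain ⟨N, hN⟩ := (Metric.tendsto_atTop.1 hElim) (δ / Real.exp W) (by positivity)
    refine ⟨N, fun m hm n hn z hz => ?_⟩
    have hEN : ∀ k : ℕ, k ≥ N → E k < δ / Real.exp W := by
      intro k hk
      have := hN k hk
      rw [Real.dist_eq, sub_zero] at this
      exact lt_of_abs_lt this
    have key : ∀ m' n' : ℕ, m' ≤ n' → N ≤ m' → dist (F m' z) (F n' z) < δ := by
      intro m' n' hmn hNm
      rw [Real.dist_eq, abs_sub_comm]
      calc |F n' z - F m' z| ≤ E m' * Real.exp W := hcauchy_bound m' n' hmn z hz.1 hz.2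
        _ < (δ / Real.exp W) * Real.exp W := by
            exact mul_lt_mul_of_pos_right (hEN m' hNm) hexp
        _ = δ := div_mul_cancel₀ δ hexp.ne'
    rcases le_total m n with hmn | hmn
    · exact key m n hmn hm
    · rw [dist_comm]; exact key n m hmn hn
  set f : ℝ → ℝ := fun t => limUnder atTop (fun n => F n t) with hfdef
  have hptwise : ∀ t ∈ Set.Ico t₀ t₁, Tendsto (fun n => F n t) atTop (nhds (f t)) := by
    intro t ht
    apply tendsto_nhds_limUnder
    have hcs : CauchySeq (fun n => F n t) := by
      rw [Metric.cauchySeq_iff]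
      intro δ hδ
      obtain ⟨N, hN⟩ := Metric.uniformCauchySeqOn_iff.1 hUC δ hδ
      exact ⟨N, fun m' hm' n' hn' => hN m' hm' n' hn' t ht⟩
    exact cauchySeq_tendsto_of_complete hcs
  have hTU : TendstoUniformlyOn F f atTop (Set.Ico t₀ t₁) :=
    hUC.tendstoUniformlyOn_of_tendsto hptwise
  have hfc1 : ∀ u ∈ Set.Ico t₀ t₁, Tendsto f (nhdsWithin u (Set.Ioi u)) (nhds (f u)) := by
    intro u hu
    rw [Metric.tendsto_nhds]
    intro δ hδ
    obtain ⟨n, hn⟩ := ((Metric.tendstoUniformlyOn_iff.1 hTU) (δ/3) (by positivity)).exists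
    have h4 := (hF n).1.1 u hu
    have h5 := (Metric.tendsto_nhds.1 h4) (δ/3) (by positivity)
    have h6 : Set.Ioo u t₁ ∈ nhdsWithin u (Set.Ioi u) :=
      Ioo_mem_nhdsGT_of_mem ⟨le_refl u, hu.2⟩
    filter_upwards [h5, h6] with s hs1 hs2
    have hsI : s ∈ Set.Ico t₀ t₁ := ⟨hu.1.trans hs2.1.le, hs2.2⟩
    calc dist (f s) (f u) ≤ dist (f s) (F n s) + dist (F n s) (F n u) + dist (F n u) (f u) :=
          dist_triangle4 _ _ _ _
      _ < δ/3 + δ/3 + δ/3 := by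
          have ha1 := hn s hsI
          have ha2 := hn u hu
          exact add_lt_add (add_lt_add ha1 hs1) (by rw [dist_comm]; exact ha2)
      _ = δ := by ring
  have hfleft : ∀ u ∈ Set.Ioc t₀ t₁, ∃ L, Tendsto f (nhdsWithin u (Set.Iio u)) (nhds L) ∧
      Tendsto (fun n => Function.leftLim (F n) u) atTop (nhds L) := by
    intro u hu
    have hcl : CauchySeq (fun n => Function.leftLim (F n) u) := by
      rw [Metric.cauchySeq_iff]
      intro δ hδ
      obtain ⟨N, hN⟩ := Metric.uniformCauchySeqOn_iff.1 hUC (δ/2) (by positivity)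
      refine ⟨N, fun m' hm' n' hn' => ?_⟩
      have h1 : |Function.leftLim (F m') u - Function.leftLim (F n') u| ≤ δ/2 := by
        refine abs_lim_sub_le hu.1 (hFleft m' u hu) (hFleft n' u hu) (fun s hs hs' => ?_)
        have hsI : s ∈ Set.Ico t₀ t₁ := ⟨hs, hs'.trans_le hu.2⟩
        have := hN m' hm' n' hn' s hsI
        rw [Real.dist_eq] at this
        exact this.le
      rw [Real.dist_eq]
      linarith
    obtain ⟨L, hL⟩ := cauchySeq_tendsto_of_complete hcl
    refine ⟨L, ?_, hL⟩
    rw [Metric.tendsto_nhds]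
    intro δ hδ
    have e1 := (Metric.tendstoUniformlyOn_iff.1 hTU) (δ/3) (by positivity)
    have e2 := (Metric.tendsto_nhds.1 hL) (δ/3) (by positivity)
    obtain ⟨n, hn1, hn2⟩ := (e1.and e2).exists
    have e3 := (Metric.tendsto_nhds.1 (hFleft n u hu)) (δ/3) (by positivity)
    have e4 : Set.Ioo t₀ u ∈ nhdsWithin u (Set.Iio u) :=
      Ioo_mem_nhdsLT_of_mem ⟨hu.1, le_refl u⟩
    filter_upwards [e3, e4] with s hs1 hs2
    have hsI : s ∈ Set.Ico t₀ t₁ := ⟨hs2.1.le, hs2.2.trans_le hu.2⟩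
    calc dist (f s) L ≤ dist (f s) (F n s) + dist (F n s) (Function.leftLim (F n) u)
          + dist (Function.leftLim (F n) u) L := dist_triangle4 _ _ _ _
      _ < δ/3 + δ/3 + δ/3 := add_lt_add (add_lt_add (hn1 s hsI) hs1) hn2
      _ = δ := by ring
  have hfcad : CadlagOn f t₀ t₁ := ⟨hfc1, fun u hu => ((hfleft u hu).imp (fun L h => h.1))⟩
  have hflefttend : ∀ u ∈ Set.Ioc t₀ t₁,
      Tendsto f (nhdsWithin u (Set.Iio u)) (nhds (Function.leftLim f u)) := by
    intro u hu
    obtain ⟨L, h1, _⟩ := hfleft u hu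
    rwa [leftLim_eq_of_tendsto h1]
  have hfbound2 : ∀ t ∈ Set.Ico t₀ t₁, |f t| ≤ |a₀| + V := by
    intro t htI
    refine le_of_tendsto ((hptwise t htI).abs) ?_
    exact Filter.Eventually.of_forall (fun n => hFbound n t htI)
  have heq : ∀ t ∈ Set.Ico t₀ t₁, f t = a₀ + jumpSum α Λ t₀ t f := by
    intro t htI
    have h1 : Tendsto (fun n => F n t) atTop (nhds (f t)) := hptwise t htI
    have h2 : Tendsto (fun n => F n t) atTop (nhds (a₀ + jumpSum α Λ t₀ t f)) := by
      refine Tendsto.congr (fun n => ((hF n).2 t htI).symm) (tendsto_const_nhds.add ?_)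
      rw [Metric.tendsto_nhds]
      intro δ hδ
      have hW1 : (0:ℝ) < W + 1 := by linarith
      have hδ'0 : 0 < δ/(2*(W+1)) := by positivity
      have e1 := (Metric.tendstoUniformlyOn_iff.1 hTU) (δ/(2*(W+1))) hδ'0
      have e2 := (Metric.tendsto_nhds.1 hElim) (δ/2) (by positivity)
      filter_upwards [e1, e2] with n hn1 hn2
      have hDn : ∀ p : ↥Λ, |Function.leftLim f (p:ℝ×ℝ).1 - Function.leftLim (F n) (p:ℝ×ℝ).1|
          ≤ δ/(2*(W+1)) := by
        intro p
        have hu : (p:ℝ×ℝ).1 ∈ Set.Ioc t₀ t₁ := ⟨(hX p).1, (hX p).2.le⟩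
        refine abs_lim_sub_le hu.1 (hflefttend _ hu) (hFleft n _ hu) (fun s hs hs' => ?_)
        have hsI : s ∈ Set.Ico t₀ t₁ := ⟨hs, hs'.trans (hX p).2⟩
        have h3 := hn1 s hsI
        rw [Real.dist_eq] at h3
        exact h3.le
      have h2' := hJgen t (fun _ : ↥Λ => True) (fun p : ↥Λ => |(p:ℝ×ℝ).2| ≤ (n:ℝ))
        (fun p _ => trivial) f (F n) (δ/(2*(W+1))) hδ'0.le hDn
      have h5 : |jumpSum α Λ t₀ t f - jumpSumTrunc α Λ (n:ℝ) t₀ t (F n)| ≤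
          (∑' p : ↥Λ, if (p:ℝ×ℝ).1 ≤ t then
            w p * |Function.leftLim f (p:ℝ×ℝ).1 - Function.leftLim (F n) (p:ℝ×ℝ).1| else 0)
          + (∑' p : ↥Λ, if ¬ (|(p:ℝ×ℝ).2| ≤ (n:ℝ)) then v p else 0) := by
        beta_reduce at h2'
        simp only [true_and] at h2'
        simp only [jumpSum, jumpSumTrunc]
        exact h2'
      have h7 : (∑' p : ↥Λ, if ¬ (|(p:ℝ×ℝ).2| ≤ (n:ℝ)) then v p else 0) = E n := by
        rw [hEdef]
        exact tsum_congr (fun p => by simp [not_le])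
      have hsum1 : Summable (fun p : ↥Λ => if (p:ℝ×ℝ).1 ≤ t then
          w p * |Function.leftLim f (p:ℝ×ℝ).1 - Function.leftLim (F n) (p:ℝ×ℝ).1| else 0) := by
        refine (hwsum.mul_right (δ/(2*(W+1)))).of_nonneg_of_le (fun p => ?_) (fun p => ?_)
        · split
          · exact mul_nonneg (hw0 p) (abs_nonneg _)
          · exact le_refl 0
        · split
          · exact mul_le_mul_of_nonneg_left (hDn p) (hw0 p)
          · exact mul_nonneg (hw0 p) hδ'0.le
      have h6 : (∑' p : ↥Λ, if (p:ℝ×ℝ).1 ≤ t then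
          w p * |Function.leftLim f (p:ℝ×ℝ).1 - Function.leftLim (F n) (p:ℝ×ℝ).1| else 0)
          ≤ W * (δ/(2*(W+1))) := by
        calc (∑' p : ↥Λ, if (p:ℝ×ℝ).1 ≤ t then
            w p * |Function.leftLim f (p:ℝ×ℝ).1 - Function.leftLim (F n) (p:ℝ×ℝ).1| else 0)
            ≤ ∑' p : ↥Λ, w p * (δ/(2*(W+1))) := by
              refine Summable.tsum_le_tsum (fun p => ?_) hsum1 (hwsum.mul_right _)
              split
              · exact mul_le_mul_of_nonneg_left (hDn p) (hw0 p)
              · exact mul_nonneg (hw0 p) hδ'0.le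
          _ = W * (δ/(2*(W+1))) := by rw [tsum_mul_right]
      have h8 : E n < δ/2 := by
        have h9 := hn2
        rw [Real.dist_eq, sub_zero] at h9
        exact lt_of_abs_lt h9
      have h9 : W * (δ/(2*(W+1))) < δ/2 := by
        calc W * (δ/(2*(W+1))) < (W+1) * (δ/(2*(W+1))) :=
              mul_lt_mul_of_pos_right (by linarith) (by positivity)
          _ = δ/2 := by field_simp
      rw [Real.dist_eq]
      calc |jumpSumTrunc α Λ (n:ℝ) t₀ t (F n) - jumpSum α Λ t₀ t f|
          = |jumpSum α Λ t₀ t f - jumpSumTrunc α Λ (n:ℝ) t₀ t (F n)| := abs_sub_comm _ _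
        _ ≤ (∑' p : ↥Λ, if (p:ℝ×ℝ).1 ≤ t then
            w p * |Function.leftLim f (p:ℝ×ℝ).1 - Function.leftLim (F n) (p:ℝ×ℝ).1| else 0)
            + E n := by rw [← h7]; exact h5
        _ < W * (δ/(2*(W+1))) + δ/2 := by
            have := lt_of_le_of_lt (add_le_add_right h6 (E n)) (add_lt_add_left h8 _)
            linarith
        _ < δ/2 + δ/2 := by linarith
        _ = δ := by ring
    exact tendsto_nhds_unique h1 h2
  have hbound_sol : ∀ (g : ℝ → ℝ),
      (∀ t ∈ Set.Ico t₀ t₁, g t = a₀ + jumpSum α Λ t₀ t g) →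
      ∀ t ∈ Set.Ico t₀ t₁, |g t| ≤ |a₀| + V := by
    intro g hgeq t htI
    rw [hgeq t htI]
    have h1 : |jumpSum α Λ t₀ t g| ≤ V := by
      have h2 := hfbd_gen (fun _ : ↥Λ => True) g t
      simpa [jumpSum] using h2
    calc |a₀ + jumpSum α Λ t₀ t g| ≤ |a₀| + |jumpSum α Λ t₀ t g| := abs_add_le _ _
      _ ≤ |a₀| + V := by linarith
  have huniq : ∀ g : ℝ → ℝ, CadlagOn g t₀ t₁ →
      (∀ t ∈ Set.Ico t₀ t₁, g t = a₀ + jumpSum α Λ t₀ t g) →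
      Set.EqOn g f (Set.Ico t₀ t₁) := by
    intro g hgcad hgeq
    have hglefttend : ∀ u ∈ Set.Ioc t₀ t₁,
        Tendsto g (nhdsWithin u (Set.Iio u)) (nhds (Function.leftLim g u)) := by
      intro u hu
      obtain ⟨L, hL⟩ := hgcad.2 u hu
      rwa [leftLim_eq_of_tendsto hL]
    have hgb := hbound_sol g hgeq
    have hfb := hbound_sol f heq
    have hT2 : (0:ℝ) ≤ 2*(|a₀|+V) := by positivity
    have hDg : ∀ p : ↥Λ, |Function.leftLim g (p:ℝ×ℝ).1 - Function.leftLim f (p:ℝ×ℝ).1|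
        ≤ 2*(|a₀|+V) := by
      intro p
      have hu : (p:ℝ×ℝ).1 ∈ Set.Ioc t₀ t₁ := ⟨(hX p).1, (hX p).2.le⟩
      refine abs_lim_sub_le hu.1 (hglefttend _ hu) (hflefttend _ hu) (fun s hs hs' => ?_)
      have hsI : s ∈ Set.Ico t₀ t₁ := ⟨hs, hs'.trans (hX p).2⟩
      calc |g s - f s| ≤ |g s| + |f s| := abs_sub _ _
        _ ≤ (|a₀|+V) + (|a₀|+V) := add_le_add (hgb s hsI) (hfb s hsI)
        _ = 2*(|a₀|+V) := by ring
    have hgr := gronwall (ι := ↥Λ) w (fun p => (p:ℝ×ℝ).1) t₀ t₁ hw0 hwsum (fun p => (hX p).2)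
      (fun t => |g t - f t|)
      (fun p => |Function.leftLim g (p:ℝ×ℝ).1 - Function.leftLim f (p:ℝ×ℝ).1|)
      0 (2*(|a₀|+V)) le_rfl hT2
      (fun t h0 h1 => ⟨abs_nonneg _, by
        calc |g t - f t| ≤ |g t| + |f t| := abs_sub _ _
          _ ≤ (|a₀|+V) + (|a₀|+V) := add_le_add (hgb t ⟨h0,h1⟩) (hfb t ⟨h0,h1⟩)
          _ = 2*(|a₀|+V) := by ring⟩)
      (fun p => abs_nonneg _)
      (fun p B hB0 hsB => by
        have hu : (p:ℝ×ℝ).1 ∈ Set.Ioc t₀ t₁ := ⟨(hX p).1, (hX p).2.le⟩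
        exact abs_lim_sub_le hu.1 (hglefttend _ hu) (hflefttend _ hu) hsB)
      (fun t h0 h1 => by
        have h2' := hJgen t (fun _ : ↥Λ => True) (fun _ : ↥Λ => True) (fun _ h => h) g f
          (2*(|a₀|+V)) hT2 hDg
        have h5 : |jumpSum α Λ t₀ t g - jumpSum α Λ t₀ t f| ≤
            (∑' p : ↥Λ, if (p:ℝ×ℝ).1 ≤ t then
              w p * |Function.leftLim g (p:ℝ×ℝ).1 - Function.leftLim f (p:ℝ×ℝ).1| else 0) := by
          beta_reduce at h2'
          simp only [true_and, not_true_eq_false, if_false, tsum_zero, add_zero] at h2'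
          simp only [jumpSum]
          exact h2'
        beta_reduce
        rw [zero_add]
        have h4 : g t - f t = jumpSum α Λ t₀ t g - jumpSum α Λ t₀ t f := by
          rw [hgeq t ⟨h0,h1⟩, heq t ⟨h0,h1⟩]; ring
        rw [h4]
        exact h5)
    intro t htI
    have h2 := hgr t htI.1 htI.2
    rw [zero_mul] at h2
    have h3 := abs_nonneg (g t - f t)
    have h4 : |g t - f t| = 0 := le_antisymm h2 h3
    exact sub_eq_zero.1 (abs_eq_zero.1 h4)
  exact ⟨f, hfcad, heq, hTU, huniq⟩
end

section
/- Let g : [t₀,t₁) → ℝ be measurable and let α : [t₀,t₁) × ℝ² → (a,b) ⊂ (0,1) be continuously differentiable with bounded derivative in its second variable. Given Π with Σ_{(x,y)∈Π}|y|^{-1/b'} < ∞ for some b < b' < 1, the functions fₙ(t) = a₀ + Σ_{(x,y)∈Π, |y|≤n} 1_{(t₀,t]}(x) y^⟨−1/α(t, fₙ(x₋), g(t))⟩ form a Cauchy sequence in (D[t₀,t₁), ‖·‖_∞) whose limit f satisfies f(t) = a₀ + Σ_{(x,y)∈Π} 1_{(t₀,t]}(x) y^⟨−1/α(t, f(x₋),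 g(t))⟩. -/
open MeasureTheory Filter Set

section AuxLemmas
open Function

lemma spow_zero (s : ℝ) : spow 0 s = 0 := by simp [spow, Real.sign_zero]

lemma abs_spow_of_ne {y : ℝ} (hy : y ≠ 0) (s : ℝ) : |spow y s| = |y| ^ s := by
  rcases lt_or_gt_of_ne hy with h | h
  · rw [spow, Real.sign_of_neg h]
    rw [abs_mul, abs_neg, abs_one, one_mul, abs_of_nonneg (Real.rpow_nonneg (abs_nonneg y) s)]
  · rw [spow, Real.sign_of_pos h]
    rw [abs_mul, abs_one, one_mul, abs_of_nonneg (Real.rpow_nonneg (abs_nonneg y) s)]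

lemma neg_one_div_le {c d : ℝ} (hc : 0 < c) (hcd : c ≤ d) : -1/c ≤ -1/d := by
  have : 1/d ≤ 1/c := one_div_le_one_div_of_le hc hcd
  rw [neg_div, neg_div]; linarith

lemma rpow_le_max_aux {y : ℝ} (hy : 0 ≤ y) {a b c : ℝ} (ha : 0 < a) (hac : a ≤ c) (hcb : c ≤ b) :
    y ^ (-1/c) ≤ max (y ^ (-1/a)) (y ^ (-1/b)) := by
  have hc : 0 < c := lt_of_lt_of_le ha hac
  rcases eq_or_lt_of_le hy with h0 | h0
  · rw [← h0, Real.zero_rpow (by positivity : (-1/c : ℝ) ≠ 0),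
      Real.zero_rpow (by positivity : (-1/a : ℝ) ≠ 0)]
    exact le_max_of_le_left le_rfl
  rcases le_or_gt 1 y with h1 | h1
  · exact le_max_of_le_right (Real.rpow_le_rpow_of_exponent_le h1 (neg_one_div_le hc hcb))
  · exact le_max_of_le_left (Real.rpow_le_rpow_of_exponent_ge h0 h1.le (neg_one_div_le ha hac))

lemma abs_spow_le_max {y : ℝ} {a b c : ℝ} (ha : 0 < a) (hac : a ≤ c) (hcb : c ≤ b) :
    |spow y (-1/c)| ≤ max (|y| ^ (-1/a)) (|y| ^ (-1/b)) := by
  rcases eq_or_ne y 0 with rfl | hy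
  · rw [spow_zero, abs_zero]
    exact le_max_of_le_left (by positivity)
  · rw [abs_spow_of_ne hy]
    exact rpow_le_max_aux (abs_nonneg y) ha hac hcb

lemma abs_spow_le_tail {y : ℝ} (h1 : 1 ≤ |y|) {c d : ℝ} (hc : 0 < c) (hcd : c ≤ d) :
    |spow y (-1/c)| ≤ |y| ^ (-1/d) := by
  have hy : y ≠ 0 := by intro h; rw [h] at h1; simp at h1; linarith
  rw [abs_spow_of_ne hy]
  exact Real.rpow_le_rpow_of_exponent_le h1 (neg_one_div_le hc hcd)

/-- Lipschitz-in-exponent bound for `spow`. -/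
lemma spow_diff_le {a b y : ℝ} (ha : 0 < a) {c₁ c₂ : ℝ} (h₁ : c₁ ∈ Set.Ioo a b)
    (h₂ : c₂ ∈ Set.Ioo a b) :
    |spow y (-1/c₁) - spow y (-1/c₂)| ≤
      (|Real.log (abs y)| * max (|y| ^ (-1/a)) (|y| ^ (-1/b)) / a^2) * |c₁ - c₂| := by
  rcases eq_or_ne y 0 with rfl | hy
  · rw [spow_zero, spow_zero, sub_zero, abs_zero]
    positivity
  have hay : 0 < |y| := abs_pos.mpr hy
  set L := Real.log |y| with hL
  set φ : ℝ → ℝ := fun c => Real.exp (L * (-1/c)) with hφ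
  have hrw : ∀ c : ℝ, |y| ^ (-1/c) = φ c := fun c => Real.rpow_def_of_pos hay _
  set M : ℝ := |L| * max (|y| ^ (-1/a)) (|y| ^ (-1/b)) / a^2 with hM
  have key : ∀ c ∈ Set.Ioo a b, HasDerivWithinAt φ (φ c * (L * (c^2)⁻¹)) (Set.Ioo a b) c := by
    intro c hc
    have hc0 : c ≠ 0 := ne_of_gt (lt_trans ha hc.1)
    have h1 : HasDerivAt (fun c : ℝ => -c⁻¹) ((c^2)⁻¹) c := by
      have := (hasDerivAt_inv hc0).fun_neg
      simpa using this
    have h1' : HasDerivAt (fun c : ℝ => L * (-1/c)) (L * (c^2)⁻¹) c := by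
      have := h1.const_mul L
      simpa [neg_div, one_div] using this
    exact h1'.exp.hasDerivWithinAt
  have hbd : ∀ c ∈ Set.Ioo a b, ‖φ c * (L * (c^2)⁻¹)‖ ≤ M := by
    intro c hc
    have hc0 : 0 < c := lt_trans ha hc.1
    have hφpos : 0 < φ c := Real.exp_pos _
    have hφle : φ c ≤ max (|y| ^ (-1/a)) (|y| ^ (-1/b)) := by
      rw [← hrw]
      exact rpow_le_max_aux (abs_nonneg y) ha hc.1.le hc.2.le
    have hcsq : (c^2)⁻¹ ≤ (a^2)⁻¹ := by
      apply inv_anti₀ (by positivity)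
      nlinarith [hc.1]
    have hnorm : ‖φ c * (L * (c^2)⁻¹)‖ = φ c * |L| * (c^2)⁻¹ := by
      rw [Real.norm_eq_abs, abs_mul, abs_mul, abs_of_pos hφpos,
        abs_of_nonneg (le_of_lt (by positivity : (0:ℝ) < (c^2)⁻¹))]
      ring
    rw [hnorm, hM, div_eq_mul_inv]
    have h0max : 0 ≤ max (|y| ^ (-1/a)) (|y| ^ (-1/b)) := le_trans hφpos.le hφle
    calc φ c * |L| * (c^2)⁻¹ ≤ max (|y| ^ (-1/a)) (|y| ^ (-1/b)) * |L| * (a^2)⁻¹ :=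
          mul_le_mul (mul_le_mul hφle (le_refl _) (abs_nonneg L) h0max) hcsq
            (by positivity) (by positivity)
      _ = |L| * max (|y| ^ (-1/a)) (|y| ^ (-1/b)) * (a^2)⁻¹ := by ring
  have hmvt := Convex.norm_image_sub_le_of_norm_hasDerivWithin_le key hbd (convex_Ioo a b) h₂ h₁
  have heq : ∀ c : ℝ, spow y (-1/c) = Real.sign y * φ c := by
    intro c; rw [spow, hrw]
  rw [heq, heq, ← mul_sub, abs_mul]
  have hsign : |Real.sign y| ≤ 1 := by
    rcases lt_or_gt_of_ne hy with h | h
    · rw [Real.sign_of_neg h]; simp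
    · rw [Real.sign_of_pos h]; simp
  calc |Real.sign y| * |φ c₁ - φ c₂| ≤ 1 * |φ c₁ - φ c₂| :=
        mul_le_mul_of_nonneg_right hsign (abs_nonneg _)
    _ = ‖φ c₁ - φ c₂‖ := by rw [one_mul]; rfl
    _ ≤ M * ‖c₁ - c₂‖ := hmvt
    _ = M * |c₁ - c₂| := rfl

/-- Product over a subset is smaller when all factors are `≥ 1`. -/
lemma prod_mono_subset_one_le {ι : Type*} {s t : Finset ι} (hst : s ⊆ t) (f : ι → ℝ)
    (hf : ∀ i ∈ t, 1 ≤ f i) : ∏ i ∈ s, f i ≤ ∏ i ∈ t, f i := by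
  classical
  rw [← Finset.prod_sdiff hst]
  have h1 : (1:ℝ) ≤ ∏ i ∈ t \ s, f i := by
    have := Finset.prod_le_prod (s := t \ s) (f := fun _ => (1:ℝ)) (g := f)
      (fun i _ => zero_le_one) (fun i hi => hf i (Finset.mem_sdiff.mp hi).1)
    simpa using this
  have h0 : (0:ℝ) ≤ ∏ i ∈ s, f i :=
    Finset.prod_nonneg (fun i hi => le_trans zero_le_one (hf i (hst hi)))
  nlinarith

/-- Discrete Gronwall product inequality. -/
lemma gron_prod {ι : Type*} (f : ι → ℝ) (c : ι → ℝ) (hc : ∀ p, 0 ≤ c p) (Q : Finset ι) :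
    (∑ p ∈ Q, c p * ∏ q ∈ Q.filter (fun q => f q < f p), (1 + c q)) ≤
      ∏ p ∈ Q, (1 + c p) - 1 := by
  classical
  induction Q using Finset.strongInduction with
  | _ Q ih =>
    rcases Q.eq_empty_or_nonempty with rfl | hne
    · simp
    obtain ⟨p₀, hp₀, hmax⟩ := Q.exists_max_image f hne
    have hsub : Q.filter (fun q => f q < f p₀) ⊆ Q.erase p₀ := by
      intro q hq
      rw [Finset.mem_filter] at hq
      exact Finset.mem_erase.mpr ⟨fun h => absurd (h ▸ hq.2) (lt_irrefl _), hq.1⟩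
    have hkey : ∀ p ∈ Q.erase p₀,
        Q.filter (fun q => f q < f p) = (Q.erase p₀).filter (fun q => f q < f p) := by
      intro p hp
      ext q
      simp only [Finset.mem_filter, Finset.mem_erase]
      constructor
      · rintro ⟨hq, hlt⟩
        refine ⟨⟨fun h => ?_, hq⟩, hlt⟩
        subst h
        exact absurd (hmax p (Finset.mem_of_mem_erase hp)) (not_le.mpr hlt)
      · rintro ⟨⟨_, hq⟩, hlt⟩; exact ⟨hq, hlt⟩
    have hone : ∀ q ∈ Q, (1:ℝ) ≤ 1 + c q := fun q _ => by linarith [hc q]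
    have h1 : c p₀ * ∏ q ∈ Q.filter (fun q => f q < f p₀), (1 + c q) ≤
        c p₀ * ∏ q ∈ Q.erase p₀, (1 + c q) := by
      apply mul_le_mul_of_nonneg_left _ (hc p₀)
      exact prod_mono_subset_one_le hsub _
        (fun q hq => hone q (Finset.mem_of_mem_erase hq))
    have h2 : (∑ p ∈ Q.erase p₀, c p * ∏ q ∈ Q.filter (fun q => f q < f p), (1 + c q)) ≤
        ∏ p ∈ Q.erase p₀, (1 + c p) - 1 := by
      calc (∑ p ∈ Q.erase p₀, c p * ∏ q ∈ Q.filter (fun q => f q < f p), (1 + c q))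
          = ∑ p ∈ Q.erase p₀, c p * ∏ q ∈ (Q.erase p₀).filter (fun q => f q < f p), (1 + c q) :=
            Finset.sum_congr rfl (fun p hp => by rw [hkey p hp])
        _ ≤ _ := ih (Q.erase p₀) (Finset.erase_ssubset hp₀)
    have hQ : ∑ p ∈ Q, c p * ∏ q ∈ Q.filter (fun q => f q < f p), (1 + c q) =
        c p₀ * ∏ q ∈ Q.filter (fun q => f q < f p₀), (1 + c q) +
        ∑ p ∈ Q.erase p₀, c p * ∏ q ∈ Q.filter (fun q => f q < f p), (1 + c q) :=
      (Finset.add_sum_erase Q _ hp₀).symm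
    have hprod : ∏ p ∈ Q, (1 + c p) = (1 + c p₀) * ∏ p ∈ Q.erase p₀, (1 + c p) :=
      (Finset.mul_prod_erase Q _ hp₀).symm
    have h3 : (0:ℝ) ≤ ∏ q ∈ Q.erase p₀, (1 + c q) :=
      Finset.prod_nonneg (fun q hq => by linarith [hc q])
    rw [hQ, hprod]
    nlinarith [h1, h2, hc p₀]

end AuxLemmas

/-- Non-autonomous case: the truncated solutions are Cauchy in supremum norm and the
limit satisfies the non-autonomous equation. -/
theorem stmt13 (a b b' t₀ t₁ a₀ : ℝ) (ha : 0 < a) (hab : a < b) (hbb' : b < b') (hb1 : b' < 1)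
    (ht : t₀ < t₁)
    (g : ℝ → ℝ) (hg : Measurable g)
    (α : ℝ → ℝ → ℝ → ℝ) (hrange : ∀ t z w, α t z w ∈ Set.Ioo a b)
    (hsmooth : ∀ t w, ContDiff ℝ 1 (fun z => α t z w))
    (hbd : ∃ C, ∀ t z w, |deriv (fun z => α t z w) z| ≤ C)
    (Λ : Set (ℝ × ℝ)) (hcount : Λ.Countable)
    (hsubΛ : Λ ⊆ Set.Ioo t₀ t₁ ×ˢ (Set.univ : Set ℝ))
    (hΛ : Summable fun p : Λ => |(p : ℝ × ℝ).2| ^ (-1 / b'))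
    (F : ℕ → ℝ → ℝ)
    (hF : ∀ n : ℕ, CadlagOn (F n) t₀ t₁ ∧
      ∀ t ∈ Set.Ico t₀ t₁, F n t = a₀ +
        ∑' p : Λ, if |(p : ℝ × ℝ).2| ≤ (n : ℝ) ∧ (p : ℝ × ℝ).1 ∈ Set.Ioc t₀ t
          then spow (p : ℝ × ℝ).2 (-1 / α t (Function.leftLim (F n) (p : ℝ × ℝ).1) (g t))
          else 0) :
    (∀ ε : ℝ, 0 < ε → ∃ N : ℕ, ∀ m n : ℕ, N ≤ m → N ≤ n →
      (⨆ t : Set.Ico t₀ t₁, |F m (t : ℝ) - F n (t : ℝ)|) ≤ ε) ∧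
    ∃ f : ℝ → ℝ, TendstoUniformlyOn F f atTop (Set.Ico t₀ t₁) ∧
      ∀ t ∈ Set.Ico t₀ t₁, f t = a₀ +
        ∑' p : Λ, if (p : ℝ × ℝ).1 ∈ Set.Ioc t₀ t
          then spow (p : ℝ × ℝ).2 (-1 / α t (Function.leftLim f (p : ℝ × ℝ).1) (g t))
          else 0 := by
  classical
  obtain ⟨C₀, hC₀⟩ := hbd
  set C : ℝ := max C₀ 0 with hCdef
  have hC : ∀ t z v, |deriv (fun z => α t z v) z| ≤ C :=
    fun t z v => le_trans (hC₀ t z v) (le_max_left _ _)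
  have hCnn : (0:ℝ) ≤ C := le_max_right _ _
  have hb0 : 0 < b := lt_trans ha hab
  have hb'0 : 0 < b' := lt_trans hb0 hbb'
  have hXmem : ∀ p : Λ, (p : ℝ × ℝ).1 ∈ Set.Ioo t₀ t₁ := fun p : Λ => (hsubΛ p.2).1
  have hα0 : ∀ t z v, 0 < α t z v := fun t z v => lt_trans ha (hrange t z v).1
  have hαb' : ∀ t z v, α t z v ≤ b' := fun t z v => le_of_lt (lt_trans (hrange t z v).2 hbb')
  have hαlip : ∀ t v z₁ z₂, |α t z₁ v - α t z₂ v| ≤ C * |z₁ - z₂| := by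
    intro t v z₁ z₂
    have hder : ∀ z ∈ (Set.univ : Set ℝ), HasDerivWithinAt (fun z => α t z v)
        (deriv (fun z => α t z v) z) Set.univ z := fun z _ =>
      ((((hsmooth t v).differentiable one_ne_zero) z).hasDerivAt).hasDerivWithinAt
    have hbd' : ∀ z ∈ (Set.univ : Set ℝ), ‖deriv (fun z => α t z v) z‖ ≤ C := fun z _ => hC t z v
    have := Convex.norm_image_sub_le_of_norm_hasDerivWithin_le hder hbd' convex_univ
      (Set.mem_univ z₂) (Set.mem_univ z₁)
    simpa [Real.norm_eq_abs] using this
  have hfin : ∀ R : ℝ, 0 < R → {p : Λ | 0 < |(p:ℝ×ℝ).2| ∧ |(p:ℝ×ℝ).2| ≤ R}.Finite := by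
    intro R hR
    have hpos : 0 < R ^ (-1/b') := Real.rpow_pos_of_pos hR _
    have hev : ∀ᶠ p : Λ in Filter.cofinite, |(p:ℝ×ℝ).2| ^ (-1/b') < R ^ (-1/b') :=
      hΛ.tendsto_cofinite_zero.eventually (gt_mem_nhds hpos)
    refine (Filter.eventually_cofinite.mp hev).subset ?_
    rintro p ⟨h1, h2⟩
    simp only [Set.mem_setOf_eq, not_lt]
    refine Real.rpow_le_rpow_of_nonpos h1 h2 ?_
    have : (0:ℝ) ≤ 1/b' := by positivity
    rw [neg_div]; linarith
  set wt : Λ → ℝ := fun p : Λ =>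
    |Real.log (abs (p:ℝ×ℝ).2)| * max (|(p:ℝ×ℝ).2| ^ (-1/a)) (|(p:ℝ×ℝ).2| ^ (-1/b)) / a^2
    with hwtdef
  have hwtnn : ∀ p, 0 ≤ wt p := by
    intro p; simp only [hwtdef]; positivity
  have hwtsum : Summable wt := by
    set θ : ℝ := 1/b - 1/b' with hθdef
    have hθ : 0 < θ := by
      have : 1/b' < 1/b := one_div_lt_one_div_of_lt hb0 hbb'
      simp only [hθdef]; linarith
    set K : ℝ := 1/(θ * a^2) with hKdef
    apply Summable.of_norm_bounded_eventually (g := fun p : Λ => K * |(p:ℝ×ℝ).2| ^ (-1/b'))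
      (hΛ.mul_left K)
    rw [Filter.eventually_cofinite]
    refine (hfin 1 one_pos).subset ?_
    intro p hp
    simp only [Set.mem_setOf_eq] at hp ⊢
    rcases eq_or_lt_of_le (abs_nonneg ((p:ℝ×ℝ).2)) with h0 | h0
    · exfalso; apply hp
      have hy : abs ((p:ℝ×ℝ).2) = 0 := h0.symm
      have hwt0 : wt p = 0 := by
        simp only [hwtdef, hy, Real.log_zero, abs_zero, zero_mul, zero_div]
      rw [Real.norm_eq_abs, hwt0, abs_zero, hy,
        Real.zero_rpow (by positivity : (-1/b' : ℝ) ≠ 0), mul_zero]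
    rcases le_or_gt (abs ((p:ℝ×ℝ).2)) 1 with h1 | h1
    · exact ⟨h0, h1⟩
    · exfalso; apply hp
      set r : ℝ := |(p:ℝ×ℝ).2| with hrdef
      have hr0 : 0 < r := lt_trans one_pos h1
      have hmax : max (r ^ (-1/a)) (r ^ (-1/b)) = r ^ (-1/b) :=
        max_eq_right (Real.rpow_le_rpow_of_exponent_le h1.le (neg_one_div_le ha hab.le))
      have hlog : |Real.log r| = Real.log r := abs_of_nonneg (Real.log_nonneg h1.le)
      have hlogle : Real.log r ≤ r ^ θ / θ := by
        have l1 : Real.log (r ^ θ) ≤ r ^ θ - 1 :=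
          Real.log_le_sub_one_of_pos (Real.rpow_pos_of_pos hr0 _)
        rw [Real.log_rpow hr0] at l1
        rw [le_div_iff₀ hθ]
        nlinarith
      have hwteq : wt p = Real.log r * r ^ (-1/b) / a^2 := by
        simp only [hwtdef, ← hrdef, hmax, hlog]
      have hfinal : Real.log r * r ^ (-1/b) / a^2 ≤ K * r ^ (-1/b') := by
        have hrp : (0:ℝ) ≤ r ^ (-1/b) := Real.rpow_nonneg hr0.le _
        have ha2 : (0:ℝ) < a^2 := by positivity
        have h2 : Real.log r * r ^ (-1/b) ≤ (r ^ θ / θ) * r ^ (-1/b) :=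
          mul_le_mul_of_nonneg_right hlogle hrp
        have h3 : (r ^ θ / θ) * r ^ (-1/b) / a^2 = K * (r ^ θ * r ^ (-1/b)) := by
          simp only [hKdef]; field_simp; try ring
        have h4 : r ^ θ * r ^ (-1/b) = r ^ (-1/b') := by
          rw [← Real.rpow_add hr0]
          congr 1
          simp only [hθdef]; ring
        calc Real.log r * r ^ (-1/b) / a^2 ≤ (r ^ θ / θ) * r ^ (-1/b) / a^2 :=
              (div_le_div_iff_of_pos_right ha2).mpr h2
          _ = K * r ^ (-1/b') := by rw [h3, h4]
      rw [Real.norm_eq_abs, abs_of_nonneg (hwtnn p), hwteq]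
      exact hfinal
  set W : ℝ := ∑' p, wt p with hWdef
  have hWnn : 0 ≤ W := by
    simp only [hWdef]; exact tsum_nonneg hwtnn
  have hEpos : 0 < Real.exp (C * W) := Real.exp_pos _
  -- the tail sums
  set T : ℕ → ℝ := fun N => ∑' p : Λ,
    if (N:ℝ) < |(p:ℝ×ℝ).2| then |(p:ℝ×ℝ).2| ^ (-1/b') else 0 with hTdef
  have hTsum : ∀ N : ℕ, Summable (fun p : Λ =>
      if (N:ℝ) < |(p:ℝ×ℝ).2| then |(p:ℝ×ℝ).2| ^ (-1/b') else 0) := by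
    intro N
    refine Summable.of_nonneg_of_le (fun p : Λ => ?_) (fun p : Λ => ?_) hΛ
    · split <;> positivity
    · split
      · exact le_rfl
      · positivity
  have hTnn : ∀ N, 0 ≤ T N := fun N => by
    simp only [hTdef]
    exact tsum_nonneg (fun p : Λ => by split <;> positivity)
  have hT0 : Tendsto T atTop (nhds 0) := by
    have hmain := tendsto_tsum_of_dominated_convergence (𝓕 := (atTop : Filter ℕ))
      (f := fun (N:ℕ) (p:Λ) => if (N:ℝ) < |(p:ℝ×ℝ).2| then |(p:ℝ×ℝ).2| ^ (-1/b') else 0)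
      (g := fun _ => (0:ℝ)) (bound := fun p : Λ => |(p:ℝ×ℝ).2| ^ (-1/b')) hΛ ?_ ?_
    · simpa [hTdef, tsum_zero] using hmain
    · intro p
      apply Tendsto.congr' _ tendsto_const_nhds
      filter_upwards [eventually_ge_atTop ⌈|(p:ℝ×ℝ).2|⌉₊] with N hN
      exact (if_neg (not_lt.mpr (le_trans (Nat.le_ceil _) (Nat.cast_le.mpr hN)))).symm
    · apply Filter.Eventually.of_forall
      intro N p
      show |if (N:ℝ) < |(p:ℝ×ℝ).2| then |(p:ℝ×ℝ).2| ^ (-1/b') else 0| ≤ |(p:ℝ×ℝ).2| ^ (-1/b')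
      split
      · rw [abs_of_nonneg (by positivity)]
      · rw [abs_zero]; positivity
  -- left limits exist for each F k
  have hLL : ∀ k : ℕ, ∀ x ∈ Set.Ioc t₀ t₁,
      Tendsto (F k) (nhdsWithin x (Set.Iio x)) (nhds (Function.leftLim (F k) x)) := by
    intro k x hx
    obtain ⟨L, hL⟩ := (hF k).1.2 x hx
    have hne : nhdsWithin x (Set.Iio x) ≠ ⊥ := by
      have : (nhdsWithin x (Set.Iio x)).NeBot := by infer_instance
      exact this.ne
    rw [leftLim_eq_of_tendsto hL]
    exact hL
  have hDiffLL : ∀ (k l : ℕ) (x : ℝ), x ∈ Set.Ioc t₀ t₁ → ∀ B : ℝ,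
      (∀ v ∈ Set.Ioo t₀ x, |F k v - F l v| ≤ B) →
      |Function.leftLim (F k) x - Function.leftLim (F l) x| ≤ B := by
    intro k l x hx B hB
    have h1 := (hLL k x hx).sub (hLL l x hx)
    have h2 := h1.abs
    apply le_of_tendsto h2
    filter_upwards [Ioo_mem_nhdsLT_of_mem (show x ∈ Set.Ioc t₀ x from ⟨hx.1, le_rfl⟩)] with v hv
    exact hB v hv
  -- THE MAIN ESTIMATE
  have main : ∀ ε : ℝ, 0 < ε → ∃ N : ℕ, ∀ m n : ℕ, N ≤ m → N ≤ n →
      ∀ t ∈ Set.Ico t₀ t₁, |F m t - F n t| ≤ ε := by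
    intro ε hε
    set δ : ℝ := ε / (2 * Real.exp (C * W)) with hδdef
    have hδpos : 0 < δ := by simp only [hδdef]; positivity
    obtain ⟨N₁, hN₁⟩ := Filter.eventually_atTop.mp (hT0.eventually (gt_mem_nhds hδpos))
    refine ⟨max N₁ 1, ?_⟩
    intro m n hm hn
    set N : ℕ := max N₁ 1 with hNdef
    have hTN : T N < δ := hN₁ N (le_max_left _ _)
    have hN1 : (1:ℝ) ≤ (N:ℝ) := by
      have : (1:ℕ) ≤ N := le_max_right _ _
      exact_mod_cast this
    have hN0 : (0:ℝ) < (N:ℝ) := lt_of_lt_of_le one_pos hN1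
    have hNm : ((N:ℕ):ℝ) ≤ (m:ℝ) := Nat.cast_le.mpr hm
    have hNn : ((N:ℕ):ℝ) ≤ (n:ℝ) := Nat.cast_le.mpr hn
    set QN : Finset Λ := (hfin (N:ℝ) hN0).toFinset with hQNdef
    have hQNmem : ∀ p : Λ, p ∈ QN ↔ (0 < |(p:ℝ×ℝ).2| ∧ |(p:ℝ×ℝ).2| ≤ (N:ℝ)) := by
      intro p; rw [hQNdef, Set.Finite.mem_toFinset]; rfl
    -- KEY inequality
    have hKEY : ∀ t ∈ Set.Ico t₀ t₁, |F m t - F n t| ≤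
        2 * T N + ∑ p ∈ QN.filter (fun p : Λ => (p:ℝ×ℝ).1 ≤ t),
          (C * wt p) * |Function.leftLim (F m) (p:ℝ×ℝ).1 - Function.leftLim (F n) (p:ℝ×ℝ).1| := by
      intro t htmem
      have hmaxpos : (0:ℝ) < max (m:ℝ) (n:ℝ) := lt_of_lt_of_le hN0 (le_trans hNm (le_max_left _ _))
      set S : Finset Λ := (hfin (max (m:ℝ) (n:ℝ)) hmaxpos).toFinset with hSdef
      have hSmem : ∀ p : Λ, p ∈ S ↔ (0 < |(p:ℝ×ℝ).2| ∧ |(p:ℝ×ℝ).2| ≤ max (m:ℝ) (n:ℝ)) := by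
        intro p; rw [hSdef, Set.Finite.mem_toFinset]; rfl
      set fm : Λ → ℝ := fun p : Λ =>
        if |(p:ℝ×ℝ).2| ≤ (m:ℝ) ∧ (p:ℝ×ℝ).1 ∈ Set.Ioc t₀ t
        then spow (p:ℝ×ℝ).2 (-1 / α t (Function.leftLim (F m) (p:ℝ×ℝ).1) (g t)) else 0
        with hfmdef
      set fn : Λ → ℝ := fun p : Λ =>
        if |(p:ℝ×ℝ).2| ≤ (n:ℝ) ∧ (p:ℝ×ℝ).1 ∈ Set.Ioc t₀ t
        then spow (p:ℝ×ℝ).2 (-1 / α t (Function.leftLim (F n) (p:ℝ×ℝ).1) (g t)) else 0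
        with hfndef
      have hsupp : ∀ (k : ℕ) (fk : Λ → ℝ), (fk = fun p : Λ =>
          if |(p:ℝ×ℝ).2| ≤ (k:ℝ) ∧ (p:ℝ×ℝ).1 ∈ Set.Ioc t₀ t
          then spow (p:ℝ×ℝ).2 (-1 / α t (Function.leftLim (F k) (p:ℝ×ℝ).1) (g t)) else 0) →
          (k:ℝ) ≤ max (m:ℝ) (n:ℝ) → ∀ p ∉ S, fk p = 0 := by
        intro k fk hfk hkle p hp
        rw [hSmem] at hp
        push_neg at hp
        by_cases hY : (p:ℝ×ℝ).2 = 0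
        · simp [hfk, hY, spow_zero]
        · have h1 : 0 < |(p:ℝ×ℝ).2| := abs_pos.mpr hY
          have h2 := hp h1
          rw [hfk]
          refine if_neg ?_
          rintro ⟨h3, _⟩
          exact absurd (le_trans h3 hkle) (not_le.mpr h2)
      have hsupp_m : ∀ p ∉ S, fm p = 0 := hsupp m fm hfmdef (le_max_left _ _)
      have hsupp_n : ∀ p ∉ S, fn p = 0 := hsupp n fn hfndef (le_max_right _ _)
      have heqm : F m t = a₀ + ∑' p, fm p := by rw [hfmdef]; exact (hF m).2 t htmem
      have heqn : F n t = a₀ + ∑' p, fn p := by rw [hfndef]; exact (hF n).2 t htmem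
      have hdiff : F m t - F n t = ∑ p ∈ S, (fm p - fn p) := by
        rw [heqm, heqn, tsum_eq_sum hsupp_m, tsum_eq_sum hsupp_n, Finset.sum_sub_distrib]
        ring
      -- bound for small-jump part
      have hstep : ∀ p ∈ S.filter (fun p : Λ => |(p:ℝ×ℝ).2| ≤ (N:ℝ)),
          |fm p - fn p| ≤ if 0 < |(p:ℝ×ℝ).2| ∧ (p:ℝ×ℝ).1 ≤ t then
            (C * wt p) * |Function.leftLim (F m) (p:ℝ×ℝ).1 - Function.leftLim (F n) (p:ℝ×ℝ).1|
            else 0 := by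
        intro p hp
        obtain ⟨hpS, hpN⟩ := Finset.mem_filter.mp hp
        by_cases hY : (p:ℝ×ℝ).2 = 0
        · have e1 : fm p = 0 := by simp [hfmdef, hY, spow_zero]
          have e2 : fn p = 0 := by simp [hfndef, hY, spow_zero]
          rw [e1, e2, sub_zero, abs_zero]
          split
          · exact mul_nonneg (mul_nonneg hCnn (hwtnn p)) (abs_nonneg _)
          · exact le_rfl
        by_cases hXt : (p:ℝ×ℝ).1 ∈ Set.Ioc t₀ t
        · have e1 : fm p = spow (p:ℝ×ℝ).2 (-1 / α t (Function.leftLim (F m) (p:ℝ×ℝ).1) (g t)) := by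
            rw [hfmdef]; exact if_pos ⟨le_trans hpN hNm, hXt⟩
          have e2 : fn p = spow (p:ℝ×ℝ).2 (-1 / α t (Function.leftLim (F n) (p:ℝ×ℝ).1) (g t)) := by
            rw [hfndef]; exact if_pos ⟨le_trans hpN hNn, hXt⟩
          rw [e1, e2, if_pos ⟨abs_pos.mpr hY, hXt.2⟩]
          have hsd := spow_diff_le (y := (p:ℝ×ℝ).2) ha
            (hrange t (Function.leftLim (F m) (p:ℝ×ℝ).1) (g t))
            (hrange t (Function.leftLim (F n) (p:ℝ×ℝ).1) (g t))
          refine le_trans hsd ?_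
          have hαd := hαlip t (g t) (Function.leftLim (F m) (p:ℝ×ℝ).1)
            (Function.leftLim (F n) (p:ℝ×ℝ).1)
          have hwteq : |Real.log (abs (p:ℝ×ℝ).2)| *
              max (|(p:ℝ×ℝ).2| ^ (-1/a)) (|(p:ℝ×ℝ).2| ^ (-1/b)) / a^2 = wt p := by
            rw [hwtdef]
          rw [hwteq]
          calc wt p * |α t (Function.leftLim (F m) (p:ℝ×ℝ).1) (g t) -
                α t (Function.leftLim (F n) (p:ℝ×ℝ).1) (g t)| ≤
              wt p * (C * |Function.leftLim (F m) (p:ℝ×ℝ).1 - Function.leftLim (F n) (p:ℝ×ℝ).1|) :=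
                mul_le_mul_of_nonneg_left hαd (hwtnn p)
            _ = (C * wt p) * |Function.leftLim (F m) (p:ℝ×ℝ).1 - Function.leftLim (F n) (p:ℝ×ℝ).1| := by
                ring
        · have e1 : fm p = 0 := by rw [hfmdef]; exact if_neg (fun h => hXt h.2)
          have e2 : fn p = 0 := by rw [hfndef]; exact if_neg (fun h => hXt h.2)
          rw [e1, e2, sub_zero, abs_zero, if_neg]
          rintro ⟨-, hle⟩
          exact hXt ⟨(hXmem p).1, hle⟩
      have hmain1 : ∑ p ∈ S.filter (fun p : Λ => |(p:ℝ×ℝ).2| ≤ (N:ℝ)), |fm p - fn p| ≤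
          ∑ p ∈ QN.filter (fun p : Λ => (p:ℝ×ℝ).1 ≤ t),
            (C * wt p) * |Function.leftLim (F m) (p:ℝ×ℝ).1 - Function.leftLim (F n) (p:ℝ×ℝ).1| := by
        refine le_trans (Finset.sum_le_sum hstep) ?_
        rw [← Finset.sum_filter]
        apply Finset.sum_le_sum_of_subset_of_nonneg
        · intro p hp
          obtain ⟨hp1, hp2⟩ := Finset.mem_filter.mp hp
          obtain ⟨hp3, hp4⟩ := Finset.mem_filter.mp hp1
          exact Finset.mem_filter.mpr ⟨(hQNmem p).mpr ⟨hp2.1, hp4⟩, hp2.2⟩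
        · intro p _ _
          exact mul_nonneg (mul_nonneg hCnn (hwtnn p)) (abs_nonneg _)
      -- bound for large-jump part
      have htail1 : ∑ p ∈ S.filter (fun p : Λ => ¬ |(p:ℝ×ℝ).2| ≤ (N:ℝ)), |fm p - fn p| ≤ 2 * T N := by
        have hstep2 : ∀ p ∈ S.filter (fun p : Λ => ¬ |(p:ℝ×ℝ).2| ≤ (N:ℝ)),
            |fm p - fn p| ≤ 2 * (if (N:ℝ) < |(p:ℝ×ℝ).2| then |(p:ℝ×ℝ).2| ^ (-1/b') else 0) := by
          intro p hp
          obtain ⟨hpS, hpN⟩ := Finset.mem_filter.mp hp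
          have hNlt : (N:ℝ) < |(p:ℝ×ℝ).2| := not_le.mp hpN
          have h1y : 1 ≤ |(p:ℝ×ℝ).2| := le_trans hN1 hNlt.le
          have hbm : |fm p| ≤ |(p:ℝ×ℝ).2| ^ (-1/b') := by
            simp only [hfmdef]
            by_cases hcond : |(p:ℝ×ℝ).2| ≤ (m:ℝ) ∧ (p:ℝ×ℝ).1 ∈ Set.Ioc t₀ t
            · rw [if_pos hcond]
              exact abs_spow_le_tail h1y (hα0 t _ (g t)) (hαb' t _ (g t))
            · rw [if_neg hcond, abs_zero]; positivity
          have hbn : |fn p| ≤ |(p:ℝ×ℝ).2| ^ (-1/b') := by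
            simp only [hfndef]
            by_cases hcond : |(p:ℝ×ℝ).2| ≤ (n:ℝ) ∧ (p:ℝ×ℝ).1 ∈ Set.Ioc t₀ t
            · rw [if_pos hcond]
              exact abs_spow_le_tail h1y (hα0 t _ (g t)) (hαb' t _ (g t))
            · rw [if_neg hcond, abs_zero]; positivity
          rw [if_pos hNlt]
          calc |fm p - fn p| ≤ |fm p| + |fn p| := abs_sub _ _
            _ ≤ 2 * |(p:ℝ×ℝ).2| ^ (-1/b') := by linarith
        refine le_trans (Finset.sum_le_sum hstep2) ?_
        rw [← Finset.mul_sum]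
        have hsle := Summable.sum_le_tsum (S.filter (fun p : Λ => ¬ |(p:ℝ×ℝ).2| ≤ (N:ℝ)))
          (fun p _ => by split <;> positivity) (hTsum N)
        have hTeq : T N = ∑' p : Λ,
            if (N:ℝ) < |(p:ℝ×ℝ).2| then |(p:ℝ×ℝ).2| ^ (-1/b') else 0 := by rw [hTdef]
        rw [hTeq]
        linarith
      calc |F m t - F n t| = |∑ p ∈ S, (fm p - fn p)| := by rw [hdiff]
        _ ≤ ∑ p ∈ S, |fm p - fn p| := Finset.abs_sum_le_sum_abs _ _
        _ = ∑ p ∈ S.filter (fun p : Λ => |(p:ℝ×ℝ).2| ≤ (N:ℝ)), |fm p - fn p| +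
            ∑ p ∈ S.filter (fun p : Λ => ¬ |(p:ℝ×ℝ).2| ≤ (N:ℝ)), |fm p - fn p| :=
            (Finset.sum_filter_add_sum_filter_not S _ _).symm
        _ ≤ (∑ p ∈ QN.filter (fun p : Λ => (p:ℝ×ℝ).1 ≤ t),
              (C * wt p) * |Function.leftLim (F m) (p:ℝ×ℝ).1 - Function.leftLim (F n) (p:ℝ×ℝ).1|)
            + 2 * T N := add_le_add hmain1 htail1
        _ = 2 * T N + ∑ p ∈ QN.filter (fun p : Λ => (p:ℝ×ℝ).1 ≤ t),
              (C * wt p) * |Function.leftLim (F m) (p:ℝ×ℝ).1 - Function.leftLim (F n) (p:ℝ×ℝ).1| := by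
            ring
    -- Gronwall iteration
    have hgron : ∀ k : ℕ, ∀ t ∈ Set.Ico t₀ t₁, (QN.filter (fun p : Λ => (p:ℝ×ℝ).1 ≤ t)).card ≤ k →
        |F m t - F n t| ≤ 2 * T N * ∏ p ∈ QN.filter (fun p : Λ => (p:ℝ×ℝ).1 ≤ t), (1 + C * wt p) := by
      intro k
      induction k with
      | zero =>
        intro t htmem hcard
        have hemp : QN.filter (fun p : Λ => (p:ℝ×ℝ).1 ≤ t) = ∅ :=
          Finset.card_eq_zero.mp (Nat.le_zero.mp hcard)
        have hk := hKEY t htmem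
        rw [hemp] at hk ⊢
        simp only [Finset.sum_empty, add_zero] at hk
        simp only [Finset.prod_empty, mul_one]
        exact hk
      | succ k ih =>
        intro t htmem hcard
        have hDb : ∀ p ∈ QN.filter (fun p : Λ => (p:ℝ×ℝ).1 ≤ t),
            |Function.leftLim (F m) (p:ℝ×ℝ).1 - Function.leftLim (F n) (p:ℝ×ℝ).1| ≤
            2 * T N * ∏ q ∈ (QN.filter (fun p : Λ => (p:ℝ×ℝ).1 ≤ t)).filter
              (fun q : Λ => (q:ℝ×ℝ).1 < (p:ℝ×ℝ).1), (1 + C * wt q) := by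
          intro p hp
          have hx := hXmem p
          have hxt : (p:ℝ×ℝ).1 ≤ t := (Finset.mem_filter.mp hp).2
          apply hDiffLL m n ((p:ℝ×ℝ).1) ⟨hx.1, hx.2.le⟩
          intro v hv
          have hvmem : v ∈ Set.Ico t₀ t₁ := ⟨hv.1.le, lt_trans hv.2 hx.2⟩
          have hsub2 : QN.filter (fun q : Λ => (q:ℝ×ℝ).1 ≤ v) ⊆
              (QN.filter (fun p : Λ => (p:ℝ×ℝ).1 ≤ t)).erase p := by
            intro q hq
            obtain ⟨hq1, hq2⟩ := Finset.mem_filter.mp hq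
            refine Finset.mem_erase.mpr ⟨?_, Finset.mem_filter.mpr
              ⟨hq1, le_trans hq2 (le_trans hv.2.le hxt)⟩⟩
            intro heq
            rw [heq] at hq2
            exact absurd hq2 (not_le.mpr hv.2)
          have hcard2 : (QN.filter (fun q : Λ => (q:ℝ×ℝ).1 ≤ v)).card ≤ k := by
            have h1 := Finset.card_le_card hsub2
            rw [Finset.card_erase_of_mem hp] at h1
            omega
          refine le_trans (ih v hvmem hcard2) ?_
          refine mul_le_mul_of_nonneg_left ?_ (by linarith [hTnn N])
          apply prod_mono_subset_one_le
          · intro q hq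
            obtain ⟨hq1, hq2⟩ := Finset.mem_filter.mp hq
            exact Finset.mem_filter.mpr ⟨Finset.mem_filter.mpr
              ⟨hq1, le_trans hq2 (le_trans hv.2.le hxt)⟩, lt_of_le_of_lt hq2 hv.2⟩
          · intro q _
            have := mul_nonneg hCnn (hwtnn q)
            linarith
        have h1 := hKEY t htmem
        have h2 : ∑ p ∈ QN.filter (fun p : Λ => (p:ℝ×ℝ).1 ≤ t),
            (C * wt p) * |Function.leftLim (F m) (p:ℝ×ℝ).1 - Function.leftLim (F n) (p:ℝ×ℝ).1| ≤
            2 * T N * (∏ p ∈ QN.filter (fun p : Λ => (p:ℝ×ℝ).1 ≤ t), (1 + C * wt p) - 1) := by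
          calc ∑ p ∈ QN.filter (fun p : Λ => (p:ℝ×ℝ).1 ≤ t),
              (C * wt p) * |Function.leftLim (F m) (p:ℝ×ℝ).1 - Function.leftLim (F n) (p:ℝ×ℝ).1| ≤
              ∑ p ∈ QN.filter (fun p : Λ => (p:ℝ×ℝ).1 ≤ t), (C * wt p) *
                (2 * T N * ∏ q ∈ (QN.filter (fun p : Λ => (p:ℝ×ℝ).1 ≤ t)).filter
                  (fun q : Λ => (q:ℝ×ℝ).1 < (p:ℝ×ℝ).1), (1 + C * wt q)) :=
                Finset.sum_le_sum (fun p hp => mul_le_mul_of_nonneg_left (hDb p hp)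
                  (mul_nonneg hCnn (hwtnn p)))
            _ = 2 * T N * ∑ p ∈ QN.filter (fun p : Λ => (p:ℝ×ℝ).1 ≤ t), (C * wt p) *
                ∏ q ∈ (QN.filter (fun p : Λ => (p:ℝ×ℝ).1 ≤ t)).filter
                  (fun q : Λ => (q:ℝ×ℝ).1 < (p:ℝ×ℝ).1), (1 + C * wt q) := by
                rw [Finset.mul_sum]
                exact Finset.sum_congr rfl (fun p _ => by ring)
            _ ≤ 2 * T N * (∏ p ∈ QN.filter (fun p : Λ => (p:ℝ×ℝ).1 ≤ t), (1 + C * wt p) - 1) := by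
                refine mul_le_mul_of_nonneg_left ?_ (by linarith [hTnn N])
                exact gron_prod (fun p : Λ => (p:ℝ×ℝ).1) (fun p : Λ => C * wt p)
                  (fun p : Λ => mul_nonneg hCnn (hwtnn p)) _
        linarith
    -- conclude
    intro t htmem
    have hg1 := hgron QN.card t htmem (Finset.card_filter_le _ _)
    have hprodnn : (0:ℝ) ≤ ∏ p ∈ QN.filter (fun p : Λ => (p:ℝ×ℝ).1 ≤ t), (1 + C * wt p) :=
      Finset.prod_nonneg (fun p _ => by linarith [mul_nonneg hCnn (hwtnn p)])
    have hprod1 : ∏ p ∈ QN.filter (fun p : Λ => (p:ℝ×ℝ).1 ≤ t), (1 + C * wt p) ≤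
        Real.exp (C * W) := by
      calc ∏ p ∈ QN.filter (fun p : Λ => (p:ℝ×ℝ).1 ≤ t), (1 + C * wt p) ≤
          ∏ p ∈ QN.filter (fun p : Λ => (p:ℝ×ℝ).1 ≤ t), Real.exp (C * wt p) :=
            Finset.prod_le_prod (fun p _ => by linarith [mul_nonneg hCnn (hwtnn p)])
              (fun p _ => by linarith [Real.add_one_le_exp (C * wt p)])
        _ = Real.exp (∑ p ∈ QN.filter (fun p : Λ => (p:ℝ×ℝ).1 ≤ t), C * wt p) :=
            (Real.exp_sum _ _).symm
        _ ≤ Real.exp (C * W) := by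
            apply Real.exp_le_exp.mpr
            rw [← Finset.mul_sum]
            have hWeq : W = ∑' p, wt p := hWdef
            rw [hWeq]
            exact mul_le_mul_of_nonneg_left
              (Summable.sum_le_tsum _ (fun p _ => hwtnn p) hwtsum) hCnn
    calc |F m t - F n t| ≤ 2 * T N * ∏ p ∈ QN.filter (fun p : Λ => (p:ℝ×ℝ).1 ≤ t), (1 + C * wt p) :=
          hg1
      _ ≤ 2 * δ * Real.exp (C * W) := by
          exact mul_le_mul (by linarith [hTN] : 2 * T N ≤ 2 * δ) hprod1 hprodnn
            (by linarith [hδpos])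
      _ = ε := by
          rw [hδdef]
          field_simp
          try ring
  constructor
  · intro ε hε
    obtain ⟨N, hmain⟩ := main ε hε
    exact ⟨N, fun m n hm hn => Real.iSup_le (fun i => hmain m n hm hn i i.2) hε.le⟩
  · have hucs : UniformCauchySeqOn F atTop (Set.Ico t₀ t₁) := by
      rw [Metric.uniformCauchySeqOn_iff]
      intro ε hε
      obtain ⟨N, hmain⟩ := main (ε/2) (by positivity)
      refine ⟨N, fun m hm n hn x hx => ?_⟩
      rw [Real.dist_eq]
      exact lt_of_le_of_lt (hmain m n hm hn x hx) (by linarith)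
    set f : ℝ → ℝ := fun x => limUnder atTop (fun k => F k x) with hfdef
    have hptc : ∀ x ∈ Set.Ico t₀ t₁, Tendsto (fun k => F k x) atTop (nhds (f x)) := by
      intro x hx
      have hcs : CauchySeq (fun k => F k x) := by
        rw [Metric.cauchySeq_iff]
        intro ε hε
        obtain ⟨N, hmain⟩ := main (ε/2) (by positivity)
        refine ⟨N, fun k hk l hl => ?_⟩
        rw [Real.dist_eq]
        exact lt_of_le_of_lt (hmain k l hk hl x hx) (by linarith)
      exact hcs.tendsto_limUnder
    have htuo : TendstoUniformlyOn F f atTop (Set.Ico t₀ t₁) :=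
      hucs.tendstoUniformlyOn_of_tendsto hptc
    refine ⟨f, htuo, ?_⟩
    -- convergence of left limits
    have hLLf : ∀ x ∈ Set.Ioc t₀ t₁,
        Tendsto (fun k => Function.leftLim (F k) x) atTop (nhds (Function.leftLim f x)) := by
      intro x hx
      have hIoo : Set.Ioo t₀ x ⊆ Set.Ico t₀ t₁ :=
        fun v hv => ⟨hv.1.le, lt_of_lt_of_le hv.2 hx.2⟩
      have hLcauchy : CauchySeq (fun k => Function.leftLim (F k) x) := by
        rw [Metric.cauchySeq_iff]
        intro ε hε
        obtain ⟨N, hmain⟩ := main (ε/2) (by positivity)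
        refine ⟨N, fun k hk l hl => ?_⟩
        rw [Real.dist_eq]
        have := hDiffLL k l x hx (ε/2) (fun v hv => hmain k l hk hl v (hIoo hv))
        linarith
      have hLtend := hLcauchy.tendsto_limUnder
      set L : ℝ := limUnder atTop (fun k => Function.leftLim (F k) x) with hLdef
      have hftend : Tendsto f (nhdsWithin x (Set.Iio x)) (nhds L) := by
        rw [Metric.tendsto_nhds]
        intro ε hε
        have h1 := Metric.tendstoUniformlyOn_iff.mp htuo (ε/3) (by positivity)
        have h2 := Metric.tendsto_atTop.mp hLtend (ε/3) (by positivity)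
        obtain ⟨K1, hK1⟩ := Filter.eventually_atTop.mp h1
        obtain ⟨K2, hK2⟩ := h2
        set nn : ℕ := max K1 K2 with hnn
        have hd1 : ∀ v ∈ Set.Ico t₀ t₁, dist (f v) (F nn v) < ε/3 := hK1 nn (le_max_left _ _)
        have hd2 : dist (Function.leftLim (F nn) x) L < ε/3 := hK2 nn (le_max_right _ _)
        have hFn := hLL nn x hx
        have hball := hFn (Metric.ball_mem_nhds (Function.leftLim (F nn) x)
          (by positivity : (0:ℝ) < ε/3))
        filter_upwards [Ioo_mem_nhdsLT_of_mem
          (show x ∈ Set.Ioc t₀ x from ⟨hx.1, le_rfl⟩), hball] with v hv hv2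
        have d1 : dist (f v) (F nn v) < ε/3 := hd1 v (hIoo hv)
        have d2 : dist (F nn v) (Function.leftLim (F nn) x) < ε/3 := Metric.mem_ball.mp hv2
        calc dist (f v) L ≤ dist (f v) (F nn v) + dist (F nn v) (Function.leftLim (F nn) x) +
              dist (Function.leftLim (F nn) x) L := dist_triangle4 _ _ _ _
          _ < ε := by linarith
      have hne : nhdsWithin x (Set.Iio x) ≠ ⊥ := by
        have : (nhdsWithin x (Set.Iio x)).NeBot := by infer_instance
        exact this.ne
      rw [leftLim_eq_of_tendsto hftend]
      exact hLtend
    -- pass to the limit in the equation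
    intro t htmem
    have hbndsum : Summable (fun p : Λ => max (|(p:ℝ×ℝ).2| ^ (-1/a)) (|(p:ℝ×ℝ).2| ^ (-1/b))) := by
      apply Summable.of_norm_bounded_eventually (g := fun p : Λ => |(p:ℝ×ℝ).2| ^ (-1/b')) hΛ
      rw [Filter.eventually_cofinite]
      refine (hfin 1 one_pos).subset ?_
      intro p hp
      simp only [Set.mem_setOf_eq] at hp ⊢
      rcases eq_or_lt_of_le (abs_nonneg ((p:ℝ×ℝ).2)) with h0 | h0
      · exfalso; apply hp
        have hy : |(p:ℝ×ℝ).2| = 0 := h0.symm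
        rw [Real.norm_eq_abs, hy, Real.zero_rpow (by positivity : (-1/a : ℝ) ≠ 0),
          Real.zero_rpow (by positivity : (-1/b : ℝ) ≠ 0),
          Real.zero_rpow (by positivity : (-1/b' : ℝ) ≠ 0)]
        simp
      rcases le_or_gt (|(p:ℝ×ℝ).2|) 1 with h1 | h1
      · exact ⟨h0, h1⟩
      · exfalso; apply hp
        have hmax : max (|(p:ℝ×ℝ).2| ^ (-1/a)) (|(p:ℝ×ℝ).2| ^ (-1/b)) = |(p:ℝ×ℝ).2| ^ (-1/b) :=
          max_eq_right (Real.rpow_le_rpow_of_exponent_le h1.le (neg_one_div_le ha hab.le))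
        rw [Real.norm_eq_abs, abs_of_nonneg (le_max_of_le_left (Real.rpow_nonneg (abs_nonneg _) _)), hmax]
        exact Real.rpow_le_rpow_of_exponent_le h1.le (neg_one_div_le hb0 hbb'.le)
    have hdom : ∀ᶠ (k : ℕ) in atTop, ∀ p : Λ,
        ‖if |(p:ℝ×ℝ).2| ≤ (k:ℝ) ∧ (p:ℝ×ℝ).1 ∈ Set.Ioc t₀ t
          then spow (p:ℝ×ℝ).2 (-1 / α t (Function.leftLim (F k) (p:ℝ×ℝ).1) (g t)) else 0‖ ≤
        max (|(p:ℝ×ℝ).2| ^ (-1/a)) (|(p:ℝ×ℝ).2| ^ (-1/b)) := by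
      apply Filter.Eventually.of_forall
      intro k p
      rw [Real.norm_eq_abs]
      split
      · exact abs_spow_le_max ha (hrange t _ (g t)).1.le (hrange t _ (g t)).2.le
      · rw [abs_zero]
        exact le_max_of_le_left (Real.rpow_nonneg (abs_nonneg _) _)
    have hpt : ∀ p : Λ, Tendsto (fun k : ℕ =>
        if |(p:ℝ×ℝ).2| ≤ (k:ℝ) ∧ (p:ℝ×ℝ).1 ∈ Set.Ioc t₀ t
          then spow (p:ℝ×ℝ).2 (-1 / α t (Function.leftLim (F k) (p:ℝ×ℝ).1) (g t)) else 0)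
        atTop (nhds (if (p:ℝ×ℝ).1 ∈ Set.Ioc t₀ t
          then spow (p:ℝ×ℝ).2 (-1 / α t (Function.leftLim f (p:ℝ×ℝ).1) (g t)) else 0)) := by
      intro p
      by_cases hXp : (p:ℝ×ℝ).1 ∈ Set.Ioc t₀ t
      · have hx2 : (p:ℝ×ℝ).1 ∈ Set.Ioc t₀ t₁ := ⟨(hXmem p).1, (hXmem p).2.le⟩
        have hLt := hLLf ((p:ℝ×ℝ).1) hx2
        rw [if_pos hXp]
        have hval : Tendsto (fun k : ℕ =>
            spow (p:ℝ×ℝ).2 (-1 / α t (Function.leftLim (F k) (p:ℝ×ℝ).1) (g t))) atTop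
            (nhds (spow (p:ℝ×ℝ).2 (-1 / α t (Function.leftLim f (p:ℝ×ℝ).1) (g t)))) := by
          rw [tendsto_iff_dist_tendsto_zero]
          have hd : Tendsto (fun k : ℕ => (wt p * C) *
              dist (Function.leftLim (F k) (p:ℝ×ℝ).1) (Function.leftLim f (p:ℝ×ℝ).1))
              atTop (nhds 0) := by
            have h1 := tendsto_iff_dist_tendsto_zero.mp hLt
            have h2 := h1.const_mul (wt p * C)
            simpa using h2
          apply squeeze_zero (fun k => dist_nonneg) _ hd
          intro k
          rw [Real.dist_eq, Real.dist_eq]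
          refine le_trans (spow_diff_le (y := (p:ℝ×ℝ).2) ha
            (hrange t (Function.leftLim (F k) (p:ℝ×ℝ).1) (g t))
            (hrange t (Function.leftLim f (p:ℝ×ℝ).1) (g t))) ?_
          have hαd := hαlip t (g t) (Function.leftLim (F k) (p:ℝ×ℝ).1)
            (Function.leftLim f (p:ℝ×ℝ).1)
          have hwteq : |Real.log (abs (p:ℝ×ℝ).2)| *
              max (|(p:ℝ×ℝ).2| ^ (-1/a)) (|(p:ℝ×ℝ).2| ^ (-1/b)) / a^2 = wt p := by
            rw [hwtdef]
          rw [hwteq]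
          calc wt p * |α t (Function.leftLim (F k) (p:ℝ×ℝ).1) (g t) -
                α t (Function.leftLim f (p:ℝ×ℝ).1) (g t)| ≤
              wt p * (C * |Function.leftLim (F k) (p:ℝ×ℝ).1 - Function.leftLim f (p:ℝ×ℝ).1|) :=
                mul_le_mul_of_nonneg_left hαd (hwtnn p)
            _ = (wt p * C) * |Function.leftLim (F k) (p:ℝ×ℝ).1 - Function.leftLim f (p:ℝ×ℝ).1| := by
                ring
        apply Tendsto.congr' _ hval
        filter_upwards [eventually_ge_atTop ⌈|(p:ℝ×ℝ).2|⌉₊] with k hk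
        exact (if_pos ⟨le_trans (Nat.le_ceil _) (Nat.cast_le.mpr hk), hXp⟩).symm
      · rw [if_neg hXp]
        apply Tendsto.congr' _ tendsto_const_nhds
        apply Filter.Eventually.of_forall
        intro k
        exact (if_neg (fun h => hXp h.2)).symm
    have hsum_t := tendsto_tsum_of_dominated_convergence (𝓕 := (atTop : Filter ℕ))
      (f := fun (k:ℕ) (p:Λ) => if |(p:ℝ×ℝ).2| ≤ (k:ℝ) ∧ (p:ℝ×ℝ).1 ∈ Set.Ioc t₀ t
          then spow (p:ℝ×ℝ).2 (-1 / α t (Function.leftLim (F k) (p:ℝ×ℝ).1) (g t)) else 0)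
      (g := fun p : Λ => if (p:ℝ×ℝ).1 ∈ Set.Ioc t₀ t
          then spow (p:ℝ×ℝ).2 (-1 / α t (Function.leftLim f (p:ℝ×ℝ).1) (g t)) else 0)
      (bound := fun p : Λ => max (|(p:ℝ×ℝ).2| ^ (-1/a)) (|(p:ℝ×ℝ).2| ^ (-1/b)))
      hbndsum hpt hdom
    have hFt : Tendsto (fun k => F k t) atTop (nhds (f t)) := hptc t htmem
    have hFt' : Tendsto (fun k => F k t) atTop (nhds (a₀ + ∑' p : Λ,
        if (p:ℝ×ℝ).1 ∈ Set.Ioc t₀ t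
          then spow (p:ℝ×ℝ).2 (-1 / α t (Function.leftLim f (p:ℝ×ℝ).1) (g t)) else 0)) := by
      have heq : (fun k : ℕ => F k t) = fun k : ℕ => a₀ + ∑' p : Λ,
          if |(p:ℝ×ℝ).2| ≤ (k:ℝ) ∧ (p:ℝ×ℝ).1 ∈ Set.Ioc t₀ t
          then spow (p:ℝ×ℝ).2 (-1 / α t (Function.leftLim (F k) (p:ℝ×ℝ).1) (g t)) else 0 :=
        funext (fun k => (hF k).2 t htmem)
      rw [heq]
      exact tendsto_const_nhds.add hsum_t
    exact tendsto_nhds_unique hFt hFt'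
end
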